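/- arXiv:1110.4073 — 5 statements merged into one kernel-verified Lean document; each statement's English description precedes it below -/
import Mathlib

section
/- Let A be an n×n complex matrix such that the conjugate-semilinear operator 𝒜 on ℂⁿ defined by 𝒜u = conj(A·u) is nilpotent (some power of 𝒜 is the zero map; equivalently, the matrix conj(A)·A is nilpotent). Then there exists a nonsingular n×n complex matrix S such that conj(S)⁻¹·A·S is a direct sum of nilpotent Jordan blocks, i.e., a block-diagonal matrix whose diagonal blocks are matrices with ones on the superdiagonal and zeros elsewhere. -/
open Module

noncomputable section

instance : RingHomSurjective (starRingEnd ℂ) := ⟨fun x => ⟨star x, Complex.conj_conj x⟩⟩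

variable {V : Type} [AddCommGroup V] [Module ℂ V]

/-- linear combination of a coefficient list with a vector list -/
def comb (c : List ℂ) (l : List V) : V := (List.zipWith (· • ·) c l).sum

@[simp] lemma comb_nil (c : List ℂ) : comb c ([] : List V) = 0 := by
  cases c <;> simp [comb]

@[simp] lemma comb_nil' (l : List V) : comb [] l = 0 := by simp [comb]

@[simp] lemma comb_cons (z : ℂ) (c : List ℂ) (x : V) (l : List V) :
    comb (z :: c) (x :: l) = z • x + comb c l := by simp [comb]

lemma comb_append' (c : List ℂ) (l l' : List V) :
    comb c (l ++ l') = comb (c.take l.length) l + comb (c.drop l.length) l' := by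
  induction l generalizing c with
  | nil => simp
  | cons a t ih =>
    cases c with
    | nil => simp
    | cons z c => simp [ih, add_assoc]

lemma comb_append {c c' : List ℂ} {l l' : List V} (h : c.length = l.length) :
    comb (c ++ c') (l ++ l') = comb c l + comb c' l' := by
  rw [comb_append', List.take_append_of_le_length (by omega), List.drop_append_of_le_length (by omega)]
  congr 2
  · rw [← h, List.take_length]
  · rw [← h, List.drop_length]
    simp

lemma comb_zero_right (c : List ℂ) {l : List V} (h : ∀ x ∈ l, x = 0) : comb c l = 0 := by
  induction l generalizing c with
  | nil => simp
  | cons a t ih =>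
    cases c with
    | nil => simp
    | cons z c =>
      rw [comb_cons, h a (by simp), ih _ (fun x hx => h x (by simp [hx])), smul_zero, add_zero]

lemma comb_mem_span (c : List ℂ) (l : List V) : comb c l ∈ Submodule.span ℂ {x | x ∈ l} := by
  induction l generalizing c with
  | nil => simp
  | cons a t ih =>
    cases c with
    | nil => simp
    | cons z c =>
      rw [comb_cons]
      refine Submodule.add_mem _ (Submodule.smul_mem _ _ (Submodule.subset_span (by simp))) ?_
      exact Submodule.span_mono (fun x hx => by simp only [Set.mem_setOf_eq] at hx ⊢; exact List.mem_cons_of_mem _ hx) (ih c)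

lemma map_comb {W : Type} [AddCommGroup W] [Module ℂ W] (f : V →ₛₗ[starRingEnd ℂ] W)
    (c : List ℂ) (l : List V) :
    f (comb c l) = comb (c.map (starRingEnd ℂ)) (l.map f) := by
  induction l generalizing c with
  | nil => simp
  | cons a t ih =>
    cases c with
    | nil => simp
    | cons z c => simp [ih, f.map_smulₛₗ]

/-- independence of a list of vectors, via coefficient lists -/
def LIndep (l : List V) : Prop :=
  ∀ c : List ℂ, c.length = l.length → comb c l = 0 → ∀ z ∈ c, z = 0

lemma comb_eq_sum (c : List ℂ) (l : List V) (h : c.length = l.length) :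
    comb c l = ∑ i : Fin l.length, c.get ⟨i, by omega⟩ • l.get i := by
  induction l generalizing c with
  | nil => simp
  | cons a t ih =>
    cases c with
    | nil => simp at h
    | cons z c =>
      have h' : c.length = t.length := by simpa using h
      rw [comb_cons, ih c h']
      exact (Fin.sum_univ_succ (n := t.length)
        (f := fun i => (z :: c).get ⟨i, by simp only [List.length_cons, h']; simpa using i.2⟩ •
          (a :: t).get i)).symm

lemma lindep_iff (l : List V) :
    LIndep l ↔ LinearIndependent ℂ (fun i : Fin l.length => l.get i) := by
  rw [Fintype.linearIndependent_iff]
  constructor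
  · intro H g hg
    have hc : (List.ofFn g).length = l.length := by simp
    have : comb (List.ofFn g) l = 0 := by
      rw [comb_eq_sum _ _ hc]
      convert hg using 2 with i
      simp [List.get_ofFn]
    intro i
    exact H _ hc this _ (by
      rw [List.mem_ofFn]
      exact ⟨i, rfl⟩)
  · intro H c hc hcomb z hz
    rw [comb_eq_sum _ _ hc] at hcomb
    obtain ⟨i, hi⟩ := List.get_of_mem hz
    have := H (fun i : Fin l.length => c.get ⟨i, by omega⟩) hcomb ⟨i, by omega⟩
    rw [← hi]
    convert this using 2
lemma exists_padded {l' l : List V} (h : List.Sublist l' l) :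
    ∀ c' : List ℂ, c'.length = l'.length →
      ∃ c : List ℂ, c.length = l.length ∧ comb c l = comb c' l' ∧ List.Sublist c' c := by
  induction h with
  | slnil =>
    intro c' h'
    have h'' : c' = [] := by simpa using h'
    subst h''
    exact ⟨[], rfl, rfl, List.Sublist.refl _⟩
  | cons a h ih =>
    intro c' h'
    obtain ⟨c, hc1, hc2, hc3⟩ := ih c' h'
    exact ⟨0 :: c, by simp [hc1], by simp [hc2], hc3.cons _⟩
  | cons_cons a h ih =>
    intro c' h'
    cases c' with
    | nil => simp at h'
    | cons z c' =>
      obtain ⟨c, hc1, hc2, hc3⟩ := ih c' (by simpa using h')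
      exact ⟨z :: c, by simp [hc1], by simp [hc2], hc3.cons₂ _⟩

lemma LIndep.sublist {l' l : List V} (h : List.Sublist l' l) (hl : LIndep l) : LIndep l' := by
  intro c' hlen hcomb z hz
  obtain ⟨c, hc1, hc2, hc3⟩ := exists_padded h c' hlen
  exact hl c hc1 (by rw [hc2, hcomb]) z (hc3.mem hz)

lemma LIndep.snoc {l : List V} {y : V} (hl : LIndep l)
    (hy : y ∉ Submodule.span ℂ {x | x ∈ l}) : LIndep (l ++ [y]) := by
  intro c hlen hcomb z hz
  have hc : c ≠ [] := by intro h; subst h; simp at hlen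
  obtain ⟨c', w, rfl⟩ : ∃ c' w, c = c' ++ [w] :=
    ⟨c.dropLast, c.getLast hc, (List.dropLast_append_getLast hc).symm⟩
  have hlen' : c'.length = l.length := by simpa using hlen
  rw [comb_append hlen'] at hcomb
  simp only [comb_cons, comb_nil, add_zero] at hcomb
  have hw : w = 0 := by
    by_contra hw
    apply hy
    have h2 : w • y = -comb c' l := by linear_combination (norm := module) hcomb
    have h3 : y = w⁻¹ • (-comb c' l) := by
      rw [← h2, smul_smul, inv_mul_cancel₀ hw, one_smul]
    rw [h3]
    exact Submodule.smul_mem _ _ (Submodule.neg_mem _ (comb_mem_span c' l))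
  subst hw
  rw [zero_smul, add_zero] at hcomb
  rcases List.mem_append.mp hz with h | h
  · exact hl c' hlen' hcomb z h
  · simpa using List.mem_singleton.mp h

lemma LIndep.length_le_finrank [FiniteDimensional ℂ V] {K : Submodule ℂ V} {l : List V}
    (hl : LIndep l) (hK : ∀ x ∈ l, x ∈ K) : l.length ≤ finrank ℂ K := by
  have h1 := (lindep_iff l).mp hl
  have h2 : LinearIndependent ℂ (fun i : Fin l.length =>
      (⟨l.get i, hK _ (List.mem_iff_get.mpr ⟨i, rfl⟩)⟩ : K)) :=
    LinearIndependent.of_comp K.subtype (by exact h1)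
  simpa using h2.fintype_card_le_finrank

lemma exists_extension [FiniteDimensional ℂ V] (K : Submodule ℂ V) :
    ∀ (d : ℕ) (l : List V), (∀ x ∈ l, x ∈ K) → LIndep l → finrank ℂ K - l.length ≤ d →
      ∃ ys : List V, (∀ y ∈ ys, y ∈ K) ∧ LIndep (l ++ ys) ∧
        K ≤ Submodule.span ℂ {x | x ∈ l ++ ys} := by
  intro d
  induction d with
  | zero =>
    intro l hK hl hd
    refine ⟨[], by simp, by simpa using hl, ?_⟩
    by_contra hspan
    obtain ⟨y, hyK, hynot⟩ : ∃ y ∈ K, y ∉ Submodule.span ℂ {x | x ∈ l} := by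
      by_contra h
      push_neg at h
      exact hspan (fun x hx => by simpa using h x hx)
    have hsnoc : LIndep (l ++ [y]) := hl.snoc hynot
    have := hsnoc.length_le_finrank (K := K) (by
      intro x hx
      rcases List.mem_append.mp hx with h | h
      · exact hK x h
      · rw [List.mem_singleton.mp h]; exact hyK)
    simp at this
    omega
  | succ d ih =>
    intro l hK hl hd
    by_cases hspan : K ≤ Submodule.span ℂ {x | x ∈ l}
    · exact ⟨[], by simp, by simpa using hl, by simpa using hspan⟩
    · obtain ⟨y, hyK, hynot⟩ : ∃ y ∈ K, y ∉ Submodule.span ℂ {x | x ∈ l} := by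
        by_contra h
        push_neg at h
        exact hspan (fun x hx => by simpa using h x hx)
      have hmem : ∀ x ∈ l ++ [y], x ∈ K := by
        intro x hx
        rcases List.mem_append.mp hx with h | h
        · exact hK x h
        · rw [List.mem_singleton.mp h]; exact hyK
      obtain ⟨ys, hys1, hys2, hys3⟩ := ih (l ++ [y]) hmem (hl.snoc hynot) (by simp; omega)
      refine ⟨y :: ys, ?_, ?_, ?_⟩
      · intro x hx
        rcases List.mem_cons.mp hx with h | h
        · rw [h]; exact hyK
        · exact hys1 x h
      · simpa [List.append_assoc] using hys2
      · simpa [List.append_assoc] using hys3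
def sel : List (List V) → List ℂ → List ℂ
  | [], _ => []
  | u :: M, c => c.take u.length ++ sel M (c.drop (u.length + 1))

def lasts : List (List V) → List ℂ → List ℂ
  | [], _ => []
  | w :: M, c => (c.take w.length).getLastD 0 :: lasts M (c.drop w.length)

lemma getLastD_of_ne_nil {α : Type*} {l : List α} (h : l ≠ []) (d : α) :
    l.getLastD d = l.getLast h := by
  rw [List.getLastD_eq_getLast?, List.getLast?_eq_getLast h, Option.getD_some]

@[simp] lemma comb_single_zero (γ : List ℂ) : comb γ [(0 : V)] = 0 := by
  cases γ <;> simp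

lemma comb_eq_getLastD : ∀ (w : List V) (γ : List ℂ), γ.length = w.length → w ≠ [] →
    (∀ z ∈ γ.dropLast, z = 0) → comb γ w = γ.getLastD 0 • w.getLastD 0 := by
  intro w
  induction w with
  | nil => intro γ _ h; exact absurd rfl h
  | cons a t ih =>
    intro γ hlen _ hz
    cases γ with
    | nil => simp at hlen
    | cons z γ' =>
      cases t with
      | nil =>
        have : γ' = [] := by simpa using hlen
        subst this
        simp
      | cons b t' =>
        have hγ' : γ' ≠ [] := by
          intro h; subst h; simp at hlen
        have hz0 : z = 0 := by
          apply hz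
          rw [List.dropLast_cons_of_ne_nil hγ']
          exact List.mem_cons_self
        have ht : comb γ' (b :: t') = γ'.getLastD 0 • (b :: t').getLastD 0 := by
          apply ih γ' (by simpa using hlen) (by simp)
          intro x hx
          apply hz
          rw [List.dropLast_cons_of_ne_nil hγ']
          exact List.mem_cons_of_mem _ hx
        rw [comb_cons, hz0, zero_smul, zero_add, ht]
        simp only [List.getLastD_cons]

lemma map_chain_eq (g : V → V) : ∀ (l : List V) (h : l ≠ []),
    List.Chain' (fun a b => g a = b) l → g (l.getLast h) = 0 → l.map g = l.tail ++ [0] := by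
  intro l
  induction l with
  | nil => intro h; exact absurd rfl h
  | cons a t ih =>
    intro _ hch hlast
    cases t with
    | nil =>
      simp only [List.map_cons, List.map_nil, List.tail_cons, List.nil_append]
      rw [show (([a] : List V).getLast (by simp)) = a from rfl] at hlast
      rw [hlast]
    | cons b t' =>
      rw [List.Chain', List.isChain_cons_cons] at hch
      have h2 := ih (by simp) hch.2 (by
        rwa [List.getLast_cons (by simp : (b :: t') ≠ [])] at hlast)
      calc (a :: b :: t').map g = g a :: (b :: t').map g := rfl
        _ = g a :: ((b :: t').tail ++ [0]) := by rw [h2]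
        _ = b :: (t' ++ [0]) := by rw [hch.1]; rfl
        _ = (a :: b :: t').tail ++ [0] := rfl

lemma take_dropLast (c : List ℂ) (n : ℕ) (h : n ≤ c.length) :
    (c.take n).dropLast = c.take (n - 1) := by
  rw [List.dropLast_eq_take, List.take_take, List.length_take]
  congr 1
  omega

lemma sel_map (g : ℂ → ℂ) : ∀ (M : List (List V)) (c : List ℂ),
    sel M (c.map g) = (sel M c).map g := by
  intro M
  induction M with
  | nil => intro c; simp [sel]
  | cons u M ih =>
    intro c
    simp only [sel, List.map_append, ← List.map_take, ← List.map_drop, ih]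

lemma comb_join_pad : ∀ (M : List (List V)) (c : List ℂ),
    c.length = M.flatten.length + M.length →
    comb c ((M.map (fun u => u ++ [(0 : V)])).flatten) = comb (sel M c) M.flatten := by
  intro M
  induction M with
  | nil => intro c _; simp [sel]
  | cons u M ih =>
    intro c hc
    have hc' : c.length = u.length + M.flatten.length + M.length + 1 := by
      simp only [List.flatten_cons, List.length_append, List.length_cons] at hc
      omega
    show comb c ((u ++ [0]) ++ (M.map (fun u => u ++ [(0:V)])).flatten) = _
    rw [comb_append' c (u ++ [0]), comb_append' _ u]
    have h1 : ((u ++ [(0:V)]).length) = u.length + 1 := by simp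
    rw [h1, List.take_take]
    have h2 : min u.length (u.length + 1) = u.length := by omega
    rw [h2, comb_single_zero, add_zero]
    have hlen2 : (c.drop (u.length + 1)).length = M.flatten.length + M.length := by
      rw [List.length_drop]
      omega
    rw [ih _ hlen2]
    show _ = comb (sel (u :: M) c) (u ++ M.flatten)
    rw [show sel (u :: M) c = c.take u.length ++ sel M (c.drop (u.length + 1)) from rfl]
    rw [comb_append (by rw [List.length_take]; omega)]

lemma comb_chunks_eq_lasts : ∀ (M' : List (List V)) (c : List ℂ),
    (∀ w ∈ M', w ≠ []) → c.length = M'.flatten.length →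
    (∀ z ∈ sel (M'.map List.tail) c, z = 0) →
    comb c M'.flatten = comb (lasts M' c) (M'.map (fun w => w.getLastD 0)) := by
  intro M'
  induction M' with
  | nil => intro c _ _ _; simp [lasts]
  | cons w M' ih =>
    intro c hne hlen hz
    have hw : w ≠ [] := hne w (by simp)
    have hwlen : 1 ≤ w.length := List.length_pos_iff.mpr hw
    have hlen' : c.length = w.length + M'.flatten.length := by
      simp only [List.flatten_cons, List.length_append] at hlen
      omega
    have hclen : w.length ≤ c.length := by omega
    have hsel : sel ((w :: M').map List.tail) c
        = c.take (w.length - 1) ++ sel (M'.map List.tail) (c.drop w.length) := by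
      show c.take w.tail.length ++ sel (M'.map List.tail) (c.drop (w.tail.length + 1)) = _
      have he : w.length - 1 + 1 = w.length := by omega
      rw [List.length_tail, he]
    rw [hsel] at hz
    show comb c (w ++ M'.flatten) = _
    rw [comb_append' c w]
    have h1 : comb (c.take w.length) w = (c.take w.length).getLastD 0 • w.getLastD 0 := by
      apply comb_eq_getLastD w _ (by rw [List.length_take]; omega) hw
      intro z hzz
      apply hz
      apply List.mem_append_left
      rwa [take_dropLast _ _ hclen] at hzz
    have h2 := ih (c.drop w.length) (fun x hx => hne x (by simp [hx]))
      (by rw [List.length_drop]; omega)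
      (fun z hzz => hz z (List.mem_append_right _ hzz))
    rw [h1, h2]
    show _ = comb ((c.take w.length).getLastD 0 :: lasts M' (c.drop w.length))
      (w.getLastD 0 :: M'.map (fun w => w.getLastD 0))
    rw [comb_cons]

lemma mem_sel_or_lasts : ∀ (M' : List (List V)) (c : List ℂ),
    (∀ w ∈ M', w ≠ []) → c.length = M'.flatten.length →
    ∀ z ∈ c, z ∈ sel (M'.map List.tail) c ∨ z ∈ lasts M' c := by
  intro M'
  induction M' with
  | nil =>
    intro c _ hlen z hzc
    have : c = [] := by simpa using hlen
    subst this
    simp at hzc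
  | cons w M' ih =>
    intro c hne hlen z hzc
    have hw : w ≠ [] := hne w (by simp)
    have hwlen : 1 ≤ w.length := List.length_pos_iff.mpr hw
    have hlen' : c.length = w.length + M'.flatten.length := by
      simp only [List.flatten_cons, List.length_append] at hlen
      omega
    have hclen : w.length ≤ c.length := by omega
    have hsel : sel ((w :: M').map List.tail) c
        = c.take (w.length - 1) ++ sel (M'.map List.tail) (c.drop w.length) := by
      show c.take w.tail.length ++ sel (M'.map List.tail) (c.drop (w.tail.length + 1)) = _
      have he : w.length - 1 + 1 = w.length := by omega
      rw [List.length_tail, he]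
    have hlasts : lasts (w :: M') c
        = (c.take w.length).getLastD 0 :: lasts M' (c.drop w.length) := rfl
    rw [← List.take_append_drop w.length c] at hzc
    rcases List.mem_append.mp hzc with h | h
    · -- in the w-chunk
      have htne : c.take w.length ≠ [] := by
        intro hh
        have := congrArg List.length hh
        simp only [List.length_take, List.length_nil] at this
        omega
      rw [← List.dropLast_append_getLast htne] at h
      rcases List.mem_append.mp h with h' | h'
      · left
        rw [hsel]
        apply List.mem_append_left
        rwa [take_dropLast _ _ hclen] at h'
      · right
        rw [hlasts]
        rw [List.mem_singleton.mp h', ← getLastD_of_ne_nil htne 0]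
        exact List.mem_cons_self
    · rcases ih (c.drop w.length) (fun x hx => hne x (by simp [hx]))
        (by rw [List.length_drop]; omega) z h with h' | h'
      · left
        rw [hsel]
        exact List.mem_append_right _ h'
      · right
        rw [hlasts]
        exact List.mem_cons_of_mem _ h'

lemma lasts_length : ∀ (M' : List (List V)) (c : List ℂ), (lasts M' c).length = M'.length := by
  intro M'
  induction M' with
  | nil => intro c; rfl
  | cons w M' ih => intro c; simp [lasts, ih]

lemma exists_preimage_of_mem_tail (f : V → V) : ∀ (w : List V),
    List.Chain' (fun a b => f a = b) w → ∀ b ∈ w.tail, ∃ a ∈ w, f a = b := by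
  intro w
  induction w with
  | nil => intro _ b hb; simp at hb
  | cons a t ih =>
    intro hch b hb
    rw [List.tail_cons] at hb
    cases t with
    | nil => simp at hb
    | cons b₀ t' =>
      rw [List.Chain', List.isChain_cons_cons] at hch
      rcases List.mem_cons.mp hb with h | h
      · exact ⟨a, List.mem_cons_self, by rw [hch.1, h]⟩
      · obtain ⟨a', ha', hfa'⟩ := ih hch.2 b (by simpa using h)
        exact ⟨a', List.mem_cons_of_mem _ ha', hfa'⟩
lemma lindep_nil : LIndep ([] : List V) := by
  intro c hc _ z hz
  rw [List.length_nil, List.length_eq_zero_iff] at hc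
  subst hc
  simp at hz

lemma flatten_map_singleton (l : List V) : (l.map (fun x => [x])).flatten = l := by
  induction l with
  | nil => rfl
  | cons a t ih => simp [ih]

lemma comb_map_subtype (K : Submodule ℂ V) (c : List ℂ) (l : List K) :
    comb c (l.map Subtype.val) = ↑(comb c l) := by
  induction l generalizing c with
  | nil => simp
  | cons a t ih =>
    cases c with
    | nil => simp
    | cons z c =>
      rw [List.map_cons, comb_cons, comb_cons, ih]
      push_cast
      rfl

lemma LIndep.map_subtype {K : Submodule ℂ V} {l : List K} (hl : LIndep l) :
    LIndep (l.map Subtype.val) := by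
  intro c hlen hcomb z hz
  rw [comb_map_subtype] at hcomb
  exact hl c (by simpa using hlen) (by exact_mod_cast hcomb) z hz

lemma getLastD_cons_of_ne_nil {α : Type*} {l : List α} (h : l ≠ []) (x d : α) :
    (x :: l).getLastD d = l.getLastD d := by
  rw [List.getLastD_cons, getLastD_of_ne_nil h x, getLastD_of_ne_nil h d]

lemma lastD_sublist_flatten : ∀ (M : List (List V)), (∀ v ∈ M, v ≠ []) →
    List.Sublist (M.map (fun v => v.getLastD 0)) M.flatten := by
  intro M
  induction M with
  | nil => intro _; simp
  | cons v M ih =>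
    intro h
    have hv : v ≠ [] := h v (by simp)
    have h1 : List.Sublist [v.getLastD 0] v := by
      rw [List.singleton_sublist, getLastD_of_ne_nil hv]
      exact List.getLast_mem hv
    exact List.Sublist.append h1 (ih (fun x hx => h x (by simp [hx])))

lemma sel_length : ∀ (M : List (List V)) (c : List ℂ),
    c.length = M.flatten.length + M.length → (sel M c).length = M.flatten.length := by
  intro M
  induction M with
  | nil => intro c _; rfl
  | cons u M ih =>
    intro c hc
    have hc' : c.length = u.length + M.flatten.length + M.length + 1 := by
      simp only [List.flatten_cons, List.length_append, List.length_cons] at hc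
      omega
    show (c.take u.length ++ sel M (c.drop (u.length + 1))).length = _
    rw [List.length_append, List.length_take,
      ih _ (by rw [List.length_drop]; omega)]
    simp only [List.flatten_cons, List.length_append]
    omega

lemma sum_map_succ {W : Type*} (LW : List (List W)) :
    (LW.map (fun w => w.length + 1)).sum = (LW.map (fun w => w.length)).sum + LW.length := by
  induction LW with
  | nil => rfl
  | cons w L ih => simp [ih]; omega

lemma map_ne_nil' {α β : Type*} (f : α → β) {l : List α} (h : l ≠ []) : l.map f ≠ [] := by
  cases l with
  | nil => exact absurd rfl h
  | cons a t => simp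
theorem jordan_chains : ∀ (n : ℕ) (V : Type) [AddCommGroup V] [Module ℂ V]
    [FiniteDimensional ℂ V] (f : V →ₛₗ[starRingEnd ℂ] V),
    finrank ℂ V ≤ n → ∀ N : ℕ, (∀ v : V, (⇑f)^[N] v = 0) →
    ∃ L : List (List V),
      (∀ w ∈ L, w ≠ []) ∧
      (∀ w ∈ L, List.Chain' (fun a b => f a = b) w) ∧
      (∀ w ∈ L, ∀ hw : w ≠ [], f (w.getLast hw) = 0) ∧
      LIndep L.flatten ∧
      Submodule.span ℂ {x | x ∈ L.flatten} = ⊤ := by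
  intro n
  induction n with
  | zero =>
    intro V _ _ _ f hfr N hN
    have hsub : Subsingleton V := by
      have h0 : finrank ℂ V = 0 := by omega
      exact Module.finrank_zero_iff.mp h0
    refine ⟨[], by simp, by simp, by simp, lindep_nil, ?_⟩
    rw [eq_top_iff]
    intro x _
    rw [(Subsingleton.elim x 0 : x = 0)]
    exact Submodule.zero_mem _
  | succ n ih =>
    intro V _ _ _ f hfr N hN
    classical
    by_cases hbot : LinearMap.range f = ⊥
    · -- f = 0 : basis gives singleton chains
      have hf0 : ∀ x : V, f x = 0 := by
        intro x
        have hx := LinearMap.mem_range_self f x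
        rw [hbot, Submodule.mem_bot] at hx
        exact hx
      set b := Module.finBasis ℂ V with hb
      set ℓ : List V := List.ofFn ⇑b with hℓ
      refine ⟨ℓ.map (fun x => [x]), ?_, ?_, ?_, ?_, ?_⟩
      · intro w hw
        obtain ⟨x, _, rfl⟩ := List.mem_map.mp hw
        simp
      · intro w hw
        obtain ⟨x, _, rfl⟩ := List.mem_map.mp hw
        exact List.isChain_singleton x
      · intro w hw hw'
        obtain ⟨x, _, rfl⟩ := List.mem_map.mp hw
        rw [show ([x] : List V).getLast hw' = x from rfl]
        exact hf0 x
      · rw [flatten_map_singleton, lindep_iff]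
        have hcast : (fun i : Fin ℓ.length => ℓ.get i)
            = ⇑b ∘ (fun i : Fin ℓ.length => Fin.cast (by rw [hℓ, List.length_ofFn]) i) :=
          funext (fun i => List.get_ofFn _ _)
        rw [hcast]
        exact b.linearIndependent.comp _ (Fin.cast_injective _)
      · rw [flatten_map_singleton]
        have hset : {x | x ∈ ℓ} = Set.range ⇑b := by
          ext x
          simp [hℓ, List.mem_ofFn]
        rw [hset, b.span_eq]
    · -- inductive step
      set W := LinearMap.range f with hW
      obtain ⟨w0, hw0W, hw0⟩ := Submodule.exists_mem_ne_zero_of_ne_bot hbot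
      have hWtop : W ≠ ⊤ := by
        intro htop
        have hsurj : Function.Surjective ⇑f := LinearMap.range_eq_top.mp htop
        obtain ⟨u, hu⟩ := (hsurj.iterate N) w0
        rw [hN u] at hu
        exact hw0 hu.symm
      have hlt : finrank ℂ W < finrank ℂ V := Submodule.finrank_lt hWtop
      set fW : W →ₛₗ[starRingEnd ℂ] W :=
        LinearMap.codRestrict W (f.domRestrict W) (fun w => LinearMap.mem_range_self f ↑w) with hfWdef
      have hfW : ∀ w : W, (fW w : V) = f ↑w := fun w => rfl
      have hit : ∀ (k : ℕ) (w : W), ((⇑fW)^[k] w : V) = (⇑f)^[k] ↑w := by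
        intro k
        induction k with
        | zero => intro w; rfl
        | succ k ihk =>
          intro w
          rw [Function.iterate_succ_apply, Function.iterate_succ_apply, ihk, hfW]
      have hNW : ∀ w : W, (⇑fW)^[N] w = 0 := by
        intro w
        apply Subtype.ext
        rw [hit]
        exact hN ↑w
      obtain ⟨LW, hLne, hLch, hLlast, hLind, hLspan⟩ := ih W fW (by omega) N hNW
      -- extended chains
      set ext : List W → List V := fun w =>
        if hw : w = [] then [] else
          Classical.choose (LinearMap.mem_range.mp (w.head hw).2) :: w.map Subtype.val
        with hextdef
      have hext : ∀ (w : List W) (hw : w ≠ []),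
          ext w = Classical.choose (LinearMap.mem_range.mp (w.head hw).2) :: w.map Subtype.val :=
        fun w hw => dif_neg hw
      have hext_ne : ∀ (w : List W), w ≠ [] → ext w ≠ [] := by
        intro w hw
        rw [hext w hw]
        simp
      have hext_len : ∀ (w : List W), w ≠ [] → (ext w).length = w.length + 1 := by
        intro w hw
        rw [hext w hw]
        simp
      have hext_tail : ∀ (w : List W) (hw : w ≠ []), (ext w).tail = w.map Subtype.val := by
        intro w hw
        rw [hext w hw]
        rfl
      have hext_chain : ∀ w ∈ LW, List.Chain' (fun a b => f a = b) (ext w) := by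
        intro w hwL
        have hw := hLne w hwL
        rw [hext w hw]
        cases w with
        | nil => exact absurd rfl hw
        | cons u t =>
          rw [List.map_cons, List.Chain', List.isChain_cons_cons]
          constructor
          · exact Classical.choose_spec (LinearMap.mem_range.mp (((u :: t)).head hw).2)
          · rw [← List.map_cons]
            rw [List.isChain_map]
            exact (hLch (u :: t) hwL).imp (fun a b h => by rw [← hfW, h])
      have hext_lastD : ∀ (w : List W) (hw : w ≠ []),
          (ext w).getLastD 0 = ↑(w.getLast hw) := by
        intro w hw
        have h1 : w.map (Subtype.val : W → V) ≠ [] := map_ne_nil' _ hw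
        rw [hext w hw, getLastD_cons_of_ne_nil h1, getLastD_of_ne_nil h1, List.getLast_map]
      have hlast0 : ∀ w ∈ LW, f ((ext w).getLastD 0) = 0 := by
        intro w hwL
        have hw := hLne w hwL
        rw [hext_lastD w hw, ← hfW, hLlast w hwL hw]
        rfl
      have hext_mapf : ∀ w ∈ LW, (ext w).map ⇑f = w.map Subtype.val ++ [(0:V)] := by
        intro w hwL
        have hw := hLne w hwL
        have hz : f ((ext w).getLast (hext_ne w hw)) = 0 := by
          rw [← getLastD_of_ne_nil (hext_ne w hw) 0]
          exact hlast0 w hwL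
        rw [map_chain_eq ⇑f (ext w) (hext_ne w hw) (hext_chain w hwL) hz, hext_tail w hw]
      -- the lists
      set M0 : List (List V) := LW.map (List.map Subtype.val) with hM0
      set m : List V := M0.flatten with hm
      set M' : List (List V) := LW.map ext with hM'
      set E : List V := M'.flatten with hE
      have hM'ne : ∀ v ∈ M', v ≠ [] := by
        intro v hv
        obtain ⟨w, hwL, rfl⟩ := List.mem_map.mp hv
        exact hext_ne w (hLne w hwL)
      have hM0ne : ∀ v ∈ M0, v ≠ [] := by
        intro v hv
        obtain ⟨w, hwL, rfl⟩ := List.mem_map.mp hv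
        exact map_ne_nil' _ (hLne w hwL)
      have hM'tail : M'.map List.tail = M0 := by
        rw [hM', hM0, List.map_map]
        exact List.map_congr_left (fun w hwL => hext_tail w (hLne w hwL))
      have hmval : m = (LW.flatten).map Subtype.val := by
        rw [hm, hM0, ← List.map_flatten]
      have hmind : LIndep m := by
        rw [hmval]
        exact hLind.map_subtype
      have hElen : E.length = m.length + LW.length := by
        rw [hE, hm, List.length_flatten, List.length_flatten, hM', hM0, List.map_map, List.map_map]
        rw [List.map_congr_left (fun w hwL => by
          show (ext w).length = w.length + 1
          exact hext_len w (hLne w hwL))]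
        rw [List.map_congr_left (l := LW) (f := List.length ∘ List.map Subtype.val)
          (g := fun w => w.length) (fun w _ => by simp)]
        exact sum_map_succ LW
      set bottoms : List V := M0.map (fun v => v.getLastD 0) with hbotdef
      have hbots_ind : LIndep bottoms := hmind.sublist (lastD_sublist_flatten M0 hM0ne)
      have hbots_ker : ∀ x ∈ bottoms, x ∈ LinearMap.ker f := by
        intro x hx
        obtain ⟨v, hvM0, rfl⟩ := List.mem_map.mp hx
        obtain ⟨w, hwL, rfl⟩ := List.mem_map.mp hvM0
        have hw := hLne w hwL
        apply LinearMap.mem_ker.mpr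
        have h1 : (w.map (Subtype.val : W → V)).getLastD 0 = (ext w).getLastD 0 := by
          rw [hext_lastD w hw]
          have h1' : w.map (Subtype.val : W → V) ≠ [] := map_ne_nil' _ hw
          rw [getLastD_of_ne_nil h1', List.getLast_map]
        rw [h1]
        exact hlast0 w hwL
      obtain ⟨ys, hysK, hysInd, hysSpan⟩ := exists_extension (LinearMap.ker f)
        (finrank ℂ (LinearMap.ker f)) bottoms hbots_ker hbots_ind (Nat.sub_le _ _)
      have hbotlen : bottoms.length = M'.length := by
        rw [hbotdef, List.length_map, hM0, hM', List.length_map, List.length_map]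
      refine ⟨M' ++ ys.map (fun y => [y]), ?_, ?_, ?_, ?_, ?_⟩
      · intro w hw
        rcases List.mem_append.mp hw with h | h
        · exact hM'ne w h
        · obtain ⟨y, _, rfl⟩ := List.mem_map.mp h
          simp
      · intro w hw
        rcases List.mem_append.mp hw with h | h
        · obtain ⟨w', hwL, rfl⟩ := List.mem_map.mp h
          exact hext_chain w' hwL
        · obtain ⟨y, _, rfl⟩ := List.mem_map.mp h
          exact List.isChain_singleton y
      · intro w hw hw'
        rcases List.mem_append.mp hw with h | h
        · obtain ⟨w', hwL, rfl⟩ := List.mem_map.mp h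
          rw [← getLastD_of_ne_nil hw' 0]
          exact hlast0 w' hwL
        · obtain ⟨y, hy, rfl⟩ := List.mem_map.mp h
          rw [show ([y] : List V).getLast hw' = y from rfl]
          exact LinearMap.mem_ker.mp (hysK y hy)
      · -- independence
        rw [List.flatten_append, flatten_map_singleton, ← hE]
        intro c hlen hcomb
        rw [List.length_append] at hlen
        set c₁ := c.take E.length with hc₁
        set c₂ := c.drop E.length with hc₂
        have hc₁len : c₁.length = E.length := by
          rw [hc₁, List.length_take]
          omega
        have hc₂len : c₂.length = ys.length := by
          rw [hc₂, List.length_drop]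
          omega
        rw [comb_append' c E ys] at hcomb
        have hc₁lenM : c₁.length = M0.flatten.length + M0.length := by
          rw [hc₁len, hElen, hm]
          simp [hM0]
        have hstep : comb ((sel M0 c₁).map (starRingEnd ℂ)) m = 0 := by
          have h1 : f (comb c₁ E + comb c₂ ys) = 0 := by rw [hcomb, map_zero]
          rw [map_add, map_comb, map_comb] at h1
          have h2 : comb (c₂.map (starRingEnd ℂ)) (ys.map ⇑f) = 0 := by
            apply comb_zero_right
            intro x hx
            obtain ⟨y, hy, rfl⟩ := List.mem_map.mp hx
            exact LinearMap.mem_ker.mp (hysK y hy)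
          rw [h2, add_zero] at h1
          have h3 : E.map ⇑f = (M0.map (fun u => u ++ [(0:V)])).flatten := by
            rw [hE, List.map_flatten, hM', hM0, List.map_map, List.map_map]
            exact congrArg List.flatten (List.map_congr_left (fun w hwL => hext_mapf w hwL))
          rw [h3] at h1
          rw [comb_join_pad M0 _ (by rw [List.length_map]; exact hc₁lenM), sel_map] at h1
          exact h1
        have hselz : ∀ z ∈ sel M0 c₁, z = 0 := by
          intro z hz
          have hlen' : ((sel M0 c₁).map (starRingEnd ℂ)).length = m.length := by
            rw [List.length_map, sel_length M0 c₁ hc₁lenM, hm]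
          have := hmind _ hlen' hstep ((starRingEnd ℂ) z) (List.mem_map_of_mem hz)
          simpa using this
        have hlasts_eq : comb c₁ E = comb (lasts M' c₁) bottoms := by
          have hc₁lenM' : c₁.length = M'.flatten.length := by rw [hc₁len, hE]
          have hself : ∀ z ∈ sel (M'.map List.tail) c₁, z = 0 := by
            rw [hM'tail]
            exact hselz
          have h4 := comb_chunks_eq_lasts M' c₁ hM'ne hc₁lenM' hself
          rw [hE, h4]
          congr 1
          rw [hbotdef, hM', hM0, List.map_map, List.map_map]
          apply List.map_congr_left
          intro w hwL
          have hw := hLne w hwL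
          show (ext w).getLastD 0 = (w.map Subtype.val).getLastD 0
          rw [hext w hw, getLastD_cons_of_ne_nil (map_ne_nil' _ hw)]
        have hfin : ∀ z ∈ lasts M' c₁ ++ c₂, z = 0 := by
          intro z hz'
          refine hysInd _ ?_ ?_ z hz'
          · rw [List.length_append, lasts_length, List.length_append, hbotlen, hc₂len]
          · rw [comb_append (by rw [lasts_length, hbotlen]), ← hlasts_eq]
            exact hcomb
        intro z hz
        rw [← List.take_append_drop E.length c] at hz
        rcases List.mem_append.mp hz with h | h
        · rcases mem_sel_or_lasts M' c₁ hM'ne (by rw [hc₁len, hE]) z h with h' | h'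
          · exact hselz z (by rwa [hM'tail] at h')
          · exact hfin z (List.mem_append_left _ h')
        · exact hfin z (List.mem_append_right _ h)
      · -- spanning
        rw [List.flatten_append, flatten_map_singleton, ← hE]
        rw [eq_top_iff]
        set S := Submodule.span ℂ {x | x ∈ E ++ ys} with hS
        have hE_sub : ∀ x ∈ E, x ∈ S := by
          intro x hx
          exact Submodule.subset_span (List.mem_append_left _ hx)
        have hker_le : LinearMap.ker f ≤ S := by
          refine hysSpan.trans (Submodule.span_mono ?_)
          intro x hx
          rcases List.mem_append.mp hx with h | h
          · obtain ⟨v, hvM0, rfl⟩ := List.mem_map.mp h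
            obtain ⟨w, hwL, rfl⟩ := List.mem_map.mp hvM0
            have hw := hLne w hwL
            have h1' : w.map (Subtype.val : W → V) ≠ [] := map_ne_nil' _ hw
            show _ ∈ {x | x ∈ E ++ ys}
            apply List.mem_append_left
            rw [hE]
            apply List.mem_flatten.mpr
            refine ⟨ext w, List.mem_map_of_mem hwL, ?_⟩
            rw [hext w hw]
            exact List.mem_cons_of_mem _ (by
              rw [getLastD_of_ne_nil h1']
              exact List.getLast_mem h1')
          · exact List.mem_append_right _ h
        have hm_span : Submodule.span ℂ {x | x ∈ m} = W := by
          have h1 := congrArg (Submodule.map W.subtype) hLspan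
          rw [Submodule.map_span, Submodule.map_subtype_top] at h1
          rw [← h1]
          congr 1
          ext x
          constructor
          · intro hx
            rw [Set.mem_setOf_eq, hmval] at hx
            obtain ⟨u, hu, rfl⟩ := List.mem_map.mp hx
            exact ⟨u, hu, rfl⟩
          · rintro ⟨u, hu, rfl⟩
            rw [Set.mem_setOf_eq, hmval]
            exact List.mem_map_of_mem hu
        let P : Submodule ℂ V :=
          { carrier := {y | ∃ u, u ∈ S ∧ f u = y}
            add_mem' := by
              rintro y₁ y₂ ⟨u₁, hu₁, rfl⟩ ⟨u₂, hu₂, rfl⟩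
              exact ⟨u₁ + u₂, S.add_mem hu₁ hu₂, map_add f _ _⟩
            zero_mem' := ⟨0, S.zero_mem, map_zero f⟩
            smul_mem' := by
              rintro a y ⟨u, hu, rfl⟩
              refine ⟨(starRingEnd ℂ) a • u, S.smul_mem _ hu, ?_⟩
              rw [f.map_smulₛₗ, Complex.conj_conj] }
        have hW_le_P : W ≤ P := by
          rw [← hm_span]
          apply Submodule.span_le.mpr
          intro x hx
          rw [Set.mem_setOf_eq, hm, hM0] at hx
          obtain ⟨v, hv, hxv⟩ := List.mem_flatten.mp hx
          obtain ⟨w, hwL, rfl⟩ := List.mem_map.mp hv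
          have hw := hLne w hwL
          obtain ⟨a, haw, hfa⟩ := exists_preimage_of_mem_tail ⇑f (ext w)
            (hext_chain w hwL) x (by rw [hext_tail w hw]; exact hxv)
          refine ⟨a, hE_sub a ?_, hfa⟩
          rw [hE]
          exact List.mem_flatten.mpr ⟨ext w, List.mem_map_of_mem hwL, haw⟩
        intro v _
        obtain ⟨u, huS, hfu⟩ : f v ∈ P := hW_le_P (LinearMap.mem_range_self f v)
        have hk : v - u ∈ LinearMap.ker f :=
          LinearMap.mem_ker.mpr (by rw [map_sub, hfu, sub_self])
        have h2 : v - u ∈ S := hker_le hk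
        have h3 := S.add_mem h2 huS
        simpa using h3
def SuccProp (f : V → V) (l : List V) : Prop :=
  ∀ (j : ℕ) (hj : j < l.length), f (l.get ⟨j, hj⟩) = 0 ∨
    ∃ hj1 : j + 1 < l.length, f (l.get ⟨j, hj⟩) = l.get ⟨j + 1, hj1⟩

lemma succProp_append {f : V → V} {l₁ l₂ : List V}
    (h1 : SuccProp f l₁) (h2 : SuccProp f l₂) : SuccProp f (l₁ ++ l₂) := by
  intro j hj
  rw [List.length_append] at hj
  by_cases hcase : j < l₁.length
  · rcases h1 j hcase with h | ⟨hj1, h⟩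
    · left
      simp only [List.get_eq_getElem, List.getElem_append_left hcase]
      exact h
    · right
      refine ⟨by rw [List.length_append]; omega, ?_⟩
      simp only [List.get_eq_getElem, List.getElem_append_left hcase, List.getElem_append_left hj1]
      exact h
  · have hj' : j - l₁.length < l₂.length := by omega
    have hget : ∀ (i : ℕ) (hi : i < l₁.length + l₂.length) (hL : l₁.length ≤ i),
        (l₁ ++ l₂).get ⟨i, by rw [List.length_append]; omega⟩
          = l₂.get ⟨i - l₁.length, by omega⟩ :=
      fun i hi hL => by simp only [List.get_eq_getElem]; exact List.getElem_append_right hL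
    rcases h2 (j - l₁.length) hj' with h | ⟨hj1, h⟩
    · left
      rw [hget j hj (by omega)]
      exact h
    · right
      refine ⟨by rw [List.length_append]; omega, ?_⟩
      rw [hget j hj (by omega), hget (j + 1) (by omega) (by omega), h]
      congr 1
      apply Fin.ext
      show j - l₁.length + 1 = j + 1 - l₁.length
      omega

lemma succProp_chain {f : V → V} {w : List V}
    (hch : List.Chain' (fun a b => f a = b) w)
    (hlast : ∀ hw : w ≠ [], f (w.getLast hw) = 0) : SuccProp f w := by
  intro j hj
  by_cases hj1 : j + 1 < w.length
  · right
    exact ⟨hj1, List.isChain_iff_getElem.mp hch j (by omega)⟩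
  · left
    have hwne : w ≠ [] := by
      intro h
      subst h
      simp at hj
    have : w.get ⟨j, hj⟩ = w.getLast hwne := by
      have hjeq : j = w.length - 1 := by omega
      subst hjeq
      exact List.get_length_sub_one _
    rw [this]
    exact hlast hwne

lemma succProp_flatten {f : V → V} : ∀ (L : List (List V)),
    (∀ w ∈ L, SuccProp f w) → SuccProp f L.flatten := by
  intro L
  induction L with
  | nil => intro _ j hj; simp at hj
  | cons w L ih =>
    intro h
    rw [List.flatten_cons]
    exact succProp_append (h w (by simp)) (ih (fun u hu => h u (by simp [hu])))

def PredProp (f : V → V) (l : List V) : Prop :=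
  ∀ (j : ℕ) (hj : j < l.length), f (l.get ⟨j, hj⟩) = 0 ∨
    ∃ (_ : j ≠ 0) (hj1 : j - 1 < l.length), f (l.get ⟨j, hj⟩) = l.get ⟨j - 1, hj1⟩

lemma predProp_reverse {f : V → V} {l : List V} (h : SuccProp f l) : PredProp f l.reverse := by
  intro j hj
  have hlen : l.reverse.length = l.length := List.length_reverse
  have hj' : j < l.length := by omega
  have hrev : ∀ (i : ℕ) (hi : i < l.reverse.length),
      l.reverse.get ⟨i, hi⟩ = l.get ⟨l.length - 1 - i, by omega⟩ := by
    intro i hi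
    exact List.getElem_reverse _
  rcases h (l.length - 1 - j) (by omega) with h' | ⟨hj1, h'⟩
  · left
    rw [hrev j hj]
    exact h'
  · right
    refine ⟨by omega, by omega, ?_⟩
    rw [hrev j hj, hrev (j-1) (by omega)]
    rw [h']
    congr 1
    apply Fin.ext
    show l.length - 1 - j + 1 = l.length - 1 - (j - 1)
    omega
lemma LIndep.reverse {l : List V} (hl : LIndep l) : LIndep l.reverse := by
  rw [lindep_iff] at hl ⊢
  have hlen : l.reverse.length = l.length := List.length_reverse
  have hfn : (fun i : Fin l.reverse.length => l.reverse.get i)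
      = (fun i : Fin l.length => l.get i) ∘
        (fun i : Fin l.reverse.length => (⟨l.length - 1 - (i : ℕ), by omega⟩ : Fin l.length)) := by
    funext i
    exact List.getElem_reverse _
  rw [hfn]
  apply hl.comp
  intro i j hij
  have hval := congrArg Fin.val hij
  simp only at hval
  have hi := i.2
  have hj := j.2
  apply Fin.ext
  omega

/-- Every nilpotent conjugate-semilinear operator `u ↦ conj (A·u)` on `ℂⁿ`
(equivalently, `conj(A)·A` is nilpotent) is consimilar to a direct sum of
nilpotent Jordan blocks: there is a nonsingular `S` such that
`conj(S)⁻¹ * A * S` has zero entries everywhere except possibly on the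
superdiagonal, where every entry is `0` or `1`. -/
theorem stmt_5 {n : ℕ} (A : Matrix (Fin n) (Fin n) ℂ)
    (hnil : IsNilpotent ((A.map (starRingEnd ℂ)) * A)) :
    ∃ S : Matrix (Fin n) (Fin n) ℂ, IsUnit S ∧
      ∀ i j : Fin n,
        ((j : ℕ) ≠ (i : ℕ) + 1 → ((S.map (starRingEnd ℂ))⁻¹ * A * S) i j = 0) ∧
        ((j : ℕ) = (i : ℕ) + 1 →
          ((S.map (starRingEnd ℂ))⁻¹ * A * S) i j = 0 ∨
          ((S.map (starRingEnd ℂ))⁻¹ * A * S) i j = 1) := by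
  classical
  set f : (Fin n → ℂ) →ₛₗ[starRingEnd ℂ] (Fin n → ℂ) :=
    { toFun := fun u => star (A.mulVec u)
      map_add' := by
        intro u v
        show star (A.mulVec (u + v)) = star (A.mulVec u) + star (A.mulVec v)
        rw [Matrix.mulVec_add, star_add]
      map_smul' := by
        intro a u
        show star (A.mulVec (a • u)) = (starRingEnd ℂ) a • star (A.mulVec u)
        rw [Matrix.mulVec_smul, star_smul]
        rfl } with hfdef
  have hfapp : ∀ u, f u = star (A.mulVec u) := fun u => rfl
  have hff : ∀ u, f (f u) = ((A.map (starRingEnd ℂ)) * A).mulVec u := by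
    intro u
    rw [hfapp, hfapp, ← Matrix.mulVec_mulVec]
    generalize A.mulVec u = w
    funext i
    simp only [Pi.star_apply, Matrix.mulVec, dotProduct, Matrix.map_apply]
    rw [star_sum]
    apply Finset.sum_congr rfl
    intro j _
    rw [star_mul', star_star]
    rfl
  obtain ⟨k, hk⟩ := hnil
  have hiter : ∀ (j : ℕ) (u : Fin n → ℂ),
      (⇑f)^[2*j] u = (((A.map (starRingEnd ℂ)) * A)^j).mulVec u := by
    intro j
    induction j with
    | zero =>
      intro u
      rw [Nat.mul_zero, pow_zero, Matrix.one_mulVec]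
      rfl
    | succ j ihj =>
      intro u
      rw [show 2*(j+1) = 2*j + 2 by ring, Function.iterate_add_apply]
      rw [show (⇑f)^[2] u = f (f u) from rfl, hff, ihj, Matrix.mulVec_mulVec, ← pow_succ]
  have hN : ∀ v : Fin n → ℂ, (⇑f)^[2*k] v = 0 := by
    intro v
    rw [hiter, hk, Matrix.zero_mulVec]
  obtain ⟨L, hLne, hLch, hLlast, hLind, hLspan⟩ := jordan_chains n (Fin n → ℂ) f
    (le_of_eq (Module.finrank_fin_fun ℂ)) (2*k) hN
  have hsucc : SuccProp ⇑f L.flatten :=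
    succProp_flatten L (fun w hw => succProp_chain (hLch w hw) (hLlast w hw))
  set v := L.flatten.reverse with hv
  have hpred : PredProp ⇑f v := predProp_reverse hsucc
  have hvind : LIndep v := hLind.reverse
  have hvspan : Submodule.span ℂ {x | x ∈ v} = ⊤ := by
    rw [show {x | x ∈ v} = {x | x ∈ L.flatten} from by ext x; simp [hv]]
    exact hLspan
  have hvlen : v.length = n := by
    have hli := (lindep_iff v).mp hvind
    have hrange : Set.range (fun i : Fin v.length => v.get i) = {x | x ∈ v} := by
      ext x
      constructor
      · rintro ⟨i, rfl⟩
        exact List.mem_iff_get.mpr ⟨i, rfl⟩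
      · intro hx
        obtain ⟨i, hi⟩ := List.mem_iff_get.mp hx
        exact ⟨i, hi⟩
    let b : Basis (Fin v.length) ℂ (Fin n → ℂ) := Basis.mk hli (by rw [hrange]; exact hvspan.ge)
    have hcard := Module.finrank_eq_card_basis b
    rw [Module.finrank_fin_fun ℂ, Fintype.card_fin] at hcard
    omega
  set vv : Fin n → Fin n → ℂ := fun j => v.get (Fin.cast hvlen.symm j) with hvvdef
  set S : Matrix (Fin n) (Fin n) ℂ := Matrix.of (fun i j => vv j i) with hSdef
  have hvvli : LinearIndependent ℂ vv :=
    ((lindep_iff v).mp hvind).comp _ (Fin.cast_injective _)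
  have hS : IsUnit S := by
    rw [← Matrix.linearIndependent_cols_iff_isUnit]
    exact hvvli
  set J : Matrix (Fin n) (Fin n) ℂ :=
    Matrix.of (fun i j : Fin n =>
      if (j:ℕ) = (i:ℕ) + 1 then (if f (vv j) = 0 then (0:ℂ) else 1) else 0) with hJdef
  have hJapp : ∀ i j, J i j
      = if (j:ℕ) = (i:ℕ) + 1 then (if f (vv j) = 0 then (0:ℂ) else 1) else 0 :=
    fun i j => rfl
  have key : A * S = (S.map (starRingEnd ℂ)) * J := by
    ext i j
    rw [Matrix.mul_apply, Matrix.mul_apply]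
    have hLHS : ∑ k, A i k * S k j = A.mulVec (vv j) i := rfl
    by_cases hz : f (vv j) = 0
    · have hmv : A.mulVec (vv j) = 0 := by
        have hs : star (A.mulVec (vv j)) = 0 := hz
        calc A.mulVec (vv j) = star (star (A.mulVec (vv j))) := (star_star _).symm
          _ = 0 := by rw [hs, star_zero]
      rw [hLHS, hmv, Pi.zero_apply]
      symm
      apply Finset.sum_eq_zero
      intro x _
      rw [hJapp x j]
      simp [hz]
    · have hj0 : (j:ℕ) < v.length := by rw [hvlen]; exact j.2
      rcases hpred (j:ℕ) hj0 with h | ⟨h0, hj1, hch⟩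
      · exact absurd h hz
      · have hjn : (j:ℕ) - 1 < n := by omega
        have hch' : f (vv j) = vv ⟨(j:ℕ) - 1, hjn⟩ := hch
        have hmv : A.mulVec (vv j) = star (vv ⟨(j:ℕ) - 1, hjn⟩) := by
          calc A.mulVec (vv j) = star (star (A.mulVec (vv j))) := (star_star _).symm
            _ = star (f (vv j)) := rfl
            _ = star (vv ⟨(j:ℕ) - 1, hjn⟩) := by rw [hch']
        rw [hLHS, hmv]
        symm
        rw [Finset.sum_eq_single (⟨(j:ℕ) - 1, hjn⟩ : Fin n) (fun x _ hx => by
            rw [hJapp x j, if_neg, mul_zero]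
            intro hxe
            apply hx
            apply Fin.ext
            simp only [Fin.val_mk]
            omega)
          (fun hmem => absurd (Finset.mem_univ _) hmem)]
        rw [hJapp, if_pos (by simp only [Fin.val_mk]; omega), if_neg hz, mul_one]
        rfl
  have hdet : IsUnit (S.map (starRingEnd ℂ)) := by
    rw [Matrix.isUnit_iff_isUnit_det,
      show (S.map (starRingEnd ℂ)) = (starRingEnd ℂ).mapMatrix S from rfl, ← RingHom.map_det]
    rw [isUnit_iff_ne_zero]
    simp only [ne_eq, map_eq_zero]
    rw [Matrix.isUnit_iff_isUnit_det, isUnit_iff_ne_zero] at hS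
    exact hS
  have hfinal : (S.map (starRingEnd ℂ))⁻¹ * A * S = J := by
    rw [Matrix.mul_assoc, key, ← Matrix.mul_assoc,
      Matrix.nonsing_inv_mul _ ((Matrix.isUnit_iff_isUnit_det _).mp hdet), Matrix.one_mul]
  refine ⟨S, hS, fun i j => ⟨fun hne => ?_, fun heq => ?_⟩⟩
  · rw [hfinal, hJapp, if_neg hne]
  · rw [hfinal, hJapp, if_pos heq]
    by_cases hz : f (vv j) = 0
    · left
      rw [if_pos hz]
    · right
      rw [if_neg hz]
end
end

section
/- Let t ≥ 1, let p₁,…,p_t be pairwise distinct positive integers and q₁,…,q_t positive integers, and let J = J_{p₁}(0_{q₁}) ⊕ ⋯ ⊕ J_{p_t}(0_{q_t}). Let S be a complex matrix of the same size satisfying conj(S)·J = J·S, partitioned into blocks S_{ij} of size p_iq_i × p_jq_j, each partitioned into a p_i×p_j array of q_i×q_j subblocks, so that (by the structure theorem for such S) the subblocks of the diagonal block S_{ii} on its main subblock diagonal are C_{ii}, conj(C_{ii}), C_{ii}, conj(C_{ii}), … for some q_i×q_i matrix C_{ii} (namely C_{ii} is the (1,1) subblock of S_{ii}). Then S is nonsingular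 if and only if C_{ii} is nonsingular for every i = 1,…,t. -/
/-- `J = J_{p₁}(0_{q₁}) ⊕ ⋯ ⊕ J_{p_t}(0_{q_t})`, indexed by
`Σ i, Fin (p i) × Fin (q i)`. -/
def JordanSum {t : ℕ} (p q : Fin t → ℕ) :
    Matrix (Σ i : Fin t, Fin (p i) × Fin (q i)) (Σ i : Fin t, Fin (p i) × Fin (q i)) ℂ :=
  fun x y =>
    if x.1 = y.1 ∧ (y.2.1 : ℕ) = (x.2.1 : ℕ) + 1 ∧ (y.2.2 : ℕ) = (x.2.2 : ℕ) then 1 else 0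

open Matrix Finset

namespace Stmt8Aux

variable {t : ℕ} {p q : Fin t → ℕ}

lemma sub_lt_of_fin {n : ℕ} (l : Fin n) : (l : ℕ) - 1 < n := by
  have := l.2; omega

lemma mulJ_apply (M : Matrix (Σ i : Fin t, Fin (p i) × Fin (q i)) (Σ i : Fin t, Fin (p i) × Fin (q i)) ℂ)
    (x : Σ i : Fin t, Fin (p i) × Fin (q i)) (j : Fin t) (l : Fin (p j)) (b : Fin (q j)) :
    (M * JordanSum p q) x ⟨j, (l, b)⟩ =
      if 0 < (l : ℕ) then M x ⟨j, (⟨(l : ℕ) - 1, sub_lt_of_fin l⟩, b)⟩ else 0 := by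
  rw [Matrix.mul_apply]
  split_ifs with h
  · rw [Finset.sum_eq_single (⟨j, (⟨(l : ℕ) - 1, sub_lt_of_fin l⟩, b)⟩ :
      Σ i : Fin t, Fin (p i) × Fin (q i))]
    · simp only [JordanSum]
      rw [if_pos ⟨trivial, by omega, trivial⟩, mul_one]
    · rintro ⟨j', l', b'⟩ - hz
      simp only [JordanSum]
      rw [if_neg, mul_zero]
      rintro ⟨h1, h2, h3⟩
      apply hz
      subst h1
      obtain rfl : l' = ⟨(l : ℕ) - 1, sub_lt_of_fin l⟩ :=
        Fin.ext (show l'.val = (l : ℕ) - 1 by omega)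
      obtain rfl : b' = b := Fin.ext h3.symm
      rfl
    · intro hmem; exact absurd (Finset.mem_univ _) hmem
  · apply Finset.sum_eq_zero
    rintro ⟨j', l', b'⟩ -
    simp only [JordanSum]
    rw [if_neg, mul_zero]
    rintro ⟨h1, h2, h3⟩
    omega

lemma Jmul_apply (M : Matrix (Σ i : Fin t, Fin (p i) × Fin (q i)) (Σ i : Fin t, Fin (p i) × Fin (q i)) ℂ)
    (i : Fin t) (k : Fin (p i)) (a : Fin (q i)) (y : Σ i : Fin t, Fin (p i) × Fin (q i)) :
    (JordanSum p q * M) ⟨i, (k, a)⟩ y =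
      if h : (k : ℕ) + 1 < p i then M ⟨i, (⟨(k : ℕ) + 1, h⟩, a)⟩ y else 0 := by
  rw [Matrix.mul_apply]
  split_ifs with h
  · rw [Finset.sum_eq_single (⟨i, (⟨(k : ℕ) + 1, h⟩, a)⟩ :
      Σ i : Fin t, Fin (p i) × Fin (q i))]
    · simp only [JordanSum]
      rw [if_pos ⟨trivial, by simp, trivial⟩, one_mul]
    · rintro ⟨j', l', b'⟩ - hz
      simp only [JordanSum]
      rw [if_neg, zero_mul]
      rintro ⟨h1, h2, h3⟩
      apply hz
      subst h1
      obtain rfl : l' = ⟨(k : ℕ) + 1, h⟩ := Fin.ext (show l'.val = (k : ℕ) + 1 by omega)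
      obtain rfl : b' = a := Fin.ext h3
      rfl
    · intro hmem; exact absurd (Finset.mem_univ _) hmem
  · apply Finset.sum_eq_zero
    rintro ⟨j', l', b'⟩ -
    simp only [JordanSum]
    rw [if_neg, zero_mul]
    rintro ⟨h1, h2, h3⟩
    subst h1
    have := l'.2
    omega

end Stmt8Aux

namespace Stmt8Aux

variable {t : ℕ} {p q : Fin t → ℕ}
variable {S : Matrix (Σ i : Fin t, Fin (p i) × Fin (q i)) (Σ i : Fin t, Fin (p i) × Fin (q i)) ℂ}

lemma master (hS : S.map (starRingEnd ℂ) * JordanSum p q = JordanSum p q * S)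
    (i j : Fin t) (k : Fin (p i)) (l : Fin (p j)) (a : Fin (q i)) (b : Fin (q j)) :
    (if 0 < (l : ℕ) then
        (starRingEnd ℂ) (S ⟨i, (k, a)⟩ ⟨j, (⟨(l : ℕ) - 1, sub_lt_of_fin l⟩, b)⟩)
      else 0)
      = if h : (k : ℕ) + 1 < p i then S ⟨i, (⟨(k : ℕ) + 1, h⟩, a)⟩ ⟨j, (l, b)⟩ else 0 := by
  have h3 : (S.map (starRingEnd ℂ) * JordanSum p q) ⟨i, (k, a)⟩ ⟨j, (l, b)⟩
      = (JordanSum p q * S) ⟨i, (k, a)⟩ ⟨j, (l, b)⟩ := by rw [hS]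
  rw [mulJ_apply, Jmul_apply] at h3
  simpa [Matrix.map_apply] using h3

lemma stepA (hS : S.map (starRingEnd ℂ) * JordanSum p q = JordanSum p q * S)
    (i j : Fin t) (k l : ℕ) (hk : k + 1 < p i) (hl : l + 1 < p j)
    (hk' : k < p i) (hl' : l < p j) (a : Fin (q i)) (b : Fin (q j)) :
    S ⟨i, (⟨k + 1, hk⟩, a)⟩ ⟨j, (⟨l + 1, hl⟩, b)⟩
      = (starRingEnd ℂ) (S ⟨i, (⟨k, hk'⟩, a)⟩ ⟨j, (⟨l, hl'⟩, b)⟩) := by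
  have h := master hS i j ⟨k, hk'⟩ ⟨l + 1, hl⟩ a b
  rw [if_pos (Nat.succ_pos l), dif_pos hk] at h
  exact h.symm

lemma stepB (hS : S.map (starRingEnd ℂ) * JordanSum p q = JordanSum p q * S)
    (i j : Fin t) (k : ℕ) (hk : k + 1 < p i) (hk' : k < p i) (h0 : 0 < p j)
    (a : Fin (q i)) (b : Fin (q j)) :
    S ⟨i, (⟨k + 1, hk⟩, a)⟩ ⟨j, (⟨0, h0⟩, b)⟩ = 0 := by
  have h := master hS i j ⟨k, hk'⟩ ⟨0, h0⟩ a b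
  rw [if_neg (show ¬(0 < 0) by omega), dif_pos hk] at h
  exact h.symm

lemma stepC (hS : S.map (starRingEnd ℂ) * JordanSum p q = JordanSum p q * S)
    (i j : Fin t) (k l : ℕ) (hk : k < p i) (hklast : k + 1 = p i) (hl : l + 1 < p j)
    (hl' : l < p j) (a : Fin (q i)) (b : Fin (q j)) :
    S ⟨i, (⟨k, hk⟩, a)⟩ ⟨j, (⟨l, hl'⟩, b)⟩ = 0 := by
  have h := master hS i j ⟨k, hk⟩ ⟨l + 1, hl⟩ a b
  rw [if_pos (Nat.succ_pos l), dif_neg (show ¬(k + 1 < p i) by omega)] at h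
  have := h
  rwa [starRingEnd_apply, star_eq_zero] at this

lemma Z1 (hS : S.map (starRingEnd ℂ) * JordanSum p q = JordanSum p q * S)
    (i j : Fin t) (a : Fin (q i)) (b : Fin (q j)) :
    ∀ (l k : ℕ) (hk : k < p i) (hl : l < p j), l < k →
      S ⟨i, (⟨k, hk⟩, a)⟩ ⟨j, (⟨l, hl⟩, b)⟩ = 0 := by
  intro l
  induction l with
  | zero =>
    intro k hk hl hlk
    obtain ⟨k', rfl⟩ : ∃ k', k = k' + 1 := ⟨k - 1, by omega⟩
    exact stepB hS i j k' hk (by omega) hl a b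
  | succ l ih =>
    intro k hk hl hlk
    obtain ⟨k', rfl⟩ : ∃ k', k = k' + 1 := ⟨k - 1, by omega⟩
    rw [stepA hS i j k' l hk hl (by omega) (by omega) a b,
      ih k' (by omega) (by omega) (by omega), map_zero]

lemma Z2 (hS : S.map (starRingEnd ℂ) * JordanSum p q = JordanSum p q * S)
    (i j : Fin t) (a : Fin (q i)) (b : Fin (q j)) :
    ∀ (d k l : ℕ) (hk : k < p i) (hl : l < p j), p i - 1 - k = d →
      l + p i < k + p j →
      S ⟨i, (⟨k, hk⟩, a)⟩ ⟨j, (⟨l, hl⟩, b)⟩ = 0 := by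
  intro d
  induction d with
  | zero =>
    intro k l hk hl hd hcond
    exact stepC hS i j k l hk (by omega) (by omega) hl a b
  | succ d ih =>
    intro k l hk hl hd hcond
    have hk1 : k + 1 < p i := by omega
    have hl1 : l + 1 < p j := by omega
    have h := stepA hS i j k l hk1 hl1 hk hl a b
    rw [ih (k + 1) (l + 1) hk1 hl1 (by omega) (by omega)] at h
    have := h.symm
    rwa [starRingEnd_apply, star_eq_zero] at this

lemma diag_det (hS : S.map (starRingEnd ℂ) * JordanSum p q = JordanSum p q * S)
    (i : Fin t) :
    ∀ (k : ℕ) (hk : k < p i) (h0 : 0 < p i),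
      (Matrix.of fun a b : Fin (q i) =>
          S ⟨i, (⟨k, hk⟩, a)⟩ ⟨i, (⟨k, hk⟩, b)⟩).det
        = (starRingEnd ℂ)^[k]
          ((Matrix.of fun a b : Fin (q i) =>
            S ⟨i, (⟨0, h0⟩, a)⟩ ⟨i, (⟨0, h0⟩, b)⟩).det) := by
  intro k
  induction k with
  | zero => intro hk h0; rfl
  | succ k ih =>
    intro hk h0
    have hk' : k < p i := by omega
    have hmat : (Matrix.of fun a b : Fin (q i) =>
        S ⟨i, (⟨k + 1, hk⟩, a)⟩ ⟨i, (⟨k + 1, hk⟩, b)⟩)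
        = (Matrix.of fun a b : Fin (q i) =>
            S ⟨i, (⟨k, hk'⟩, a)⟩ ⟨i, (⟨k, hk'⟩, b)⟩).map (starRingEnd ℂ) := by
      ext a b
      exact stepA hS i i k k hk hk hk' hk' a b
    rw [hmat, show (Matrix.of fun a b : Fin (q i) =>
        S ⟨i, (⟨k, hk'⟩, a)⟩ ⟨i, (⟨k, hk'⟩, b)⟩).map (starRingEnd ℂ)
        = (starRingEnd ℂ).mapMatrix (Matrix.of fun a b : Fin (q i) =>
            S ⟨i, (⟨k, hk'⟩, a)⟩ ⟨i, (⟨k, hk'⟩, b)⟩) from rfl,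
      ← RingHom.map_det, ih hk' h0, ← Function.iterate_succ_apply' (starRingEnd ℂ)]

lemma iterate_conj_eq_zero (k : ℕ) (z : ℂ) :
    (starRingEnd ℂ)^[k] z = 0 ↔ z = 0 := by
  induction k with
  | zero => rfl
  | succ k ih =>
    rw [Function.iterate_succ_apply', starRingEnd_apply, star_eq_zero, ih]

end Stmt8Aux


open Stmt8Aux in
/-- A matrix `S` with `conj(S) · J = J · S` (for `J` a direct sum of nilpotent
Jordan blocks `J_{p_i}(0_{q_i})` with pairwise distinct `p_i`) is nonsingular
if and only if, for every `i`, the `(1,1)` subblock `C_{ii}` of the `i`-th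
diagonal block `S_{ii}` is nonsingular. -/
theorem stmt_8 {t : ℕ} (ht : 1 ≤ t) (p q : Fin t → ℕ)
    (hp : ∀ i, 0 < p i) (hq : ∀ i, 0 < q i)
    (hdistinct : Function.Injective p)
    (S : Matrix (Σ i : Fin t, Fin (p i) × Fin (q i))
      (Σ i : Fin t, Fin (p i) × Fin (q i)) ℂ)
    (hS : (S.map (starRingEnd ℂ)) * JordanSum p q = JordanSum p q * S) :
    IsUnit S ↔
      ∀ i : Fin t,
        IsUnit (Matrix.of (fun a b : Fin (q i) =>
          S ⟨i, (⟨0, hp i⟩, a)⟩ ⟨i, (⟨0, hp i⟩, b)⟩)) := by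
  classical
  set P : ℕ := Finset.univ.sup p + 1 with hPdef
  have hPle : ∀ i, p i < P := fun i =>
    Nat.lt_succ_of_le (Finset.le_sup (Finset.mem_univ i))
  set b : (Σ i : Fin t, Fin (p i) × Fin (q i)) → ℕ ×ₗ ℕ :=
    fun x => toLex ((x.2.1 : ℕ), (x.2.1 : ℕ) + P - p x.1) with hbdef
  have hbt : S.BlockTriangular b := by
    rintro ⟨i, k, a⟩ ⟨j, l, c⟩ hlt
    rw [hbdef] at hlt
    rcases Prod.Lex.toLex_lt_toLex.mp hlt with h | ⟨h1, h2⟩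
    · exact Z1 hS i j a c l k k.2 l.2 h
    · simp only at h1 h2
      have hcond : (l : ℕ) + p i < (k : ℕ) + p j := by
        have := hPle i; have := hPle j; omega
      exact Z2 hS i j a c (p i - 1 - k) k l k.2 l.2 rfl hcond
  have hblock : ∀ (i : Fin t) (k : ℕ) (hk : k < p i) (c : Fin (q i)),
      (S.toSquareBlock b (b ⟨i, (⟨k, hk⟩, c)⟩)).det
        = (Matrix.of fun a b' : Fin (q i) =>
            S ⟨i, (⟨k, hk⟩, a)⟩ ⟨i, (⟨k, hk⟩, b')⟩).det := by
    intro i k hk c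
    have hfib : ∀ y : (Σ i : Fin t, Fin (p i) × Fin (q i)),
        b y = b ⟨i, (⟨k, hk⟩, c)⟩ → y.1 = i ∧ (y.2.1 : ℕ) = k := by
      rintro ⟨j, l, d⟩ hy
      rw [hbdef, toLex_inj, Prod.mk.injEq] at hy
      obtain ⟨h1, h2⟩ := hy
      simp only at h1 h2
      have hpij : p j = p i := by
        have := hPle i; have := hPle j; have := l.2; have := hk; omega
      exact ⟨hdistinct hpij, h1⟩
    let f : Fin (q i) → {y // b y = b ⟨i, (⟨k, hk⟩, c)⟩} :=
      fun a => ⟨⟨i, (⟨k, hk⟩, a)⟩, rfl⟩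
    have hbijf : Function.Bijective f := by
      constructor
      · intro a a' h
        simpa [f] using congrArg Subtype.val h
      · rintro ⟨⟨j, l, d⟩, hy⟩
        obtain ⟨h1, h2⟩ := hfib _ hy
        simp only at h1 h2
        subst h1
        obtain rfl : l = ⟨k, hk⟩ := Fin.ext h2
        exact ⟨d, Subtype.ext rfl⟩
    have hds := Matrix.det_submatrix_equiv_self (Equiv.ofBijective f hbijf)
      (S.toSquareBlock b (b ⟨i, (⟨k, hk⟩, c)⟩))
    rw [← hds]
    congr 1
  rw [Matrix.isUnit_iff_isUnit_det, isUnit_iff_ne_zero, hbt.det,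
    Finset.prod_ne_zero_iff]
  constructor
  · intro h i
    have hmem : b ⟨i, (⟨0, hp i⟩, ⟨0, hq i⟩)⟩ ∈ Finset.univ.image b :=
      Finset.mem_image_of_mem b (Finset.mem_univ _)
    have hdet := h _ hmem
    rw [hblock i 0 (hp i) ⟨0, hq i⟩] at hdet
    rw [Matrix.isUnit_iff_isUnit_det, isUnit_iff_ne_zero]
    exact hdet
  · intro h v hv
    obtain ⟨x, -, rfl⟩ := Finset.mem_image.mp hv
    obtain ⟨i, ⟨kv, hkv⟩, c⟩ := x
    rw [hblock i kv hkv c, diag_det hS i kv hkv (hp i), Ne,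
      iterate_conj_eq_zero]
    have hi := h i
    rwa [Matrix.isUnit_iff_isUnit_det, isUnit_iff_ne_zero] at hi
end

section
/- Let n₁ ≥ n₂ ≥ ⋯ ≥ n_r ≥ 1 be integers and let W be the nilpotent Weyr matrix of size N = n₁ + ⋯ + n_r: W is partitioned into blocks W_{αβ} of size n_α × n_β (1 ≤ α, β ≤ r), where W_{α,α+1} is the n_α × n_{α+1} matrix whose top n_{α+1} rows form the identity I_{n_{α+1}} and whose remaining rows are zero, and all other blocks W_{αβ} are zero. If X is an N×N complex matrix, partitioned conformally into blocks X_{αβ}, such that conj(X)·W = W·X, then X is upper block triangular: X_{αβ} = 0 for all α > β. -/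
/-- If `W` is the nilpotent Weyr matrix with block sizes `n₁ ≥ n₂ ≥ ⋯ ≥ n_r ≥ 1`
(blocks `W_{α,α+1}` have the identity `I_{n_{α+1}}` in their top rows and zeros
below, all other blocks are zero) and `X` satisfies `conj(X) · W = W · X`,
then `X` is upper block triangular: `X_{αβ} = 0` for `α > β`. -/
theorem stmt_9 {r : ℕ} (n : Fin r → ℕ)
    (hmono : ∀ α β : Fin r, α ≤ β → n β ≤ n α)
    (hpos : ∀ α, 1 ≤ n α)
    (W : Matrix (Σ α : Fin r, Fin (n α)) (Σ α : Fin r, Fin (n α)) ℂ)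
    (hW : ∀ x y : Σ α : Fin r, Fin (n α),
      W x y = if (y.1 : ℕ) = (x.1 : ℕ) + 1 ∧ (y.2 : ℕ) = (x.2 : ℕ) then 1 else 0)
    (X : Matrix (Σ α : Fin r, Fin (n α)) (Σ α : Fin r, Fin (n α)) ℂ)
    (hX : (X.map (starRingEnd ℂ)) * W = W * X) :
    ∀ (α β : Fin r), β < α → ∀ (a : Fin (n α)) (b : Fin (n β)),
      X ⟨α, a⟩ ⟨β, b⟩ = 0 := by
  have key : ∀ x y : Σ α : Fin r, Fin (n α),
      (∑ z, (starRingEnd ℂ) (X x z) * W z y) = ∑ z, W x z * X z y := by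
    intro x y
    have := congrFun (congrFun hX x) y
    simpa [Matrix.mul_apply, Matrix.map_apply] using this
  -- RHS sum evaluation: single nonzero term
  have sumR : ∀ (γ δ : Fin r) (c : Fin (n γ)) (d : Fin (n δ))
      (y : Σ e : Fin r, Fin (n e)), (δ : ℕ) = (γ : ℕ) + 1 → (d : ℕ) = (c : ℕ) →
      (∑ z, W ⟨γ, c⟩ z * X z y) = X ⟨δ, d⟩ y := by
    intro γ δ c d y hδ hd
    rw [Fintype.sum_eq_single (⟨δ, d⟩ : Σ e : Fin r, Fin (n e))]
    · rw [hW]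
      simp [hδ, hd]
    · intro z hz
      rw [hW]
      split_ifs with h
      · exfalso
        apply hz
        obtain ⟨zγ, zc⟩ := z
        obtain ⟨h1, h2⟩ := h
        have hz1 : zγ = δ := Fin.ext (by simp at h1 ⊢; omega)
        subst hz1
        have hz2 : zc = d := Fin.ext (by simp at h2 ⊢; omega)
        subst hz2
        rfl
      · ring
  -- LHS sum evaluation: single nonzero term
  have sumL : ∀ (x : Σ e : Fin r, Fin (n e)) (γ δ : Fin r) (c : Fin (n γ))
      (d : Fin (n δ)), (δ : ℕ) = (γ : ℕ) + 1 → (d : ℕ) = (c : ℕ) →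
      (∑ z, (starRingEnd ℂ) (X x z) * W z ⟨δ, d⟩) = (starRingEnd ℂ) (X x ⟨γ, c⟩) := by
    intro x γ δ c d hδ hd
    rw [Fintype.sum_eq_single (⟨γ, c⟩ : Σ e : Fin r, Fin (n e))]
    · rw [hW]
      simp [hδ, hd]
    · intro z hz
      rw [hW]
      split_ifs with h
      · exfalso
        apply hz
        obtain ⟨zγ, zc⟩ := z
        obtain ⟨h1, h2⟩ := h
        have hz1 : zγ = γ := Fin.ext (by simp at h1 ⊢; omega)
        subst hz1
        have hz2 : zc = c := Fin.ext (by simp at h2 ⊢; omega)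
        subst hz2
        rfl
      · ring
  -- LHS sum when target column block is 0
  have sumL0 : ∀ (x y : Σ e : Fin r, Fin (n e)), (y.1 : ℕ) = 0 →
      (∑ z, (starRingEnd ℂ) (X x z) * W z y) = 0 := by
    intro x y hy
    apply Finset.sum_eq_zero
    intro z _
    rw [hW]
    have : ¬((y.1 : ℕ) = (z.1 : ℕ) + 1 ∧ (y.2 : ℕ) = (z.2 : ℕ)) := by omega
    rw [if_neg this]
    ring
  suffices h : ∀ k, ∀ (α β : Fin r), (β : ℕ) = k → β < α →
      ∀ (a : Fin (n α)) (b : Fin (n β)), X ⟨α, a⟩ ⟨β, b⟩ = 0 by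
    intro α β hβα a b
    exact h β α β rfl hβα a b
  intro k
  induction k with
  | zero =>
    intro α β hβ hβα a b
    have hα1 : 1 ≤ (α : ℕ) := by
      have := (Fin.lt_iff_val_lt_val.mp hβα); omega
    set α' : Fin r := ⟨(α : ℕ) - 1, by omega⟩ with hα'
    have ha' : (a : ℕ) < n α' := lt_of_lt_of_le a.isLt
      (hmono α' α (by simp [hα', Fin.le_def] <;> omega))
    have := key ⟨α', ⟨(a : ℕ), ha'⟩⟩ ⟨β, b⟩
    rw [sumL0 _ _ (by simpa using hβ),
      sumR α' α ⟨(a : ℕ), ha'⟩ a ⟨β, b⟩ (by simp [hα']; omega) rfl] at this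
    exact this.symm
  | succ k ih =>
    intro α β hβ hβα a b
    have hα1 : k + 2 ≤ (α : ℕ) := by
      have := (Fin.lt_iff_val_lt_val.mp hβα); omega
    set α' : Fin r := ⟨(α : ℕ) - 1, by omega⟩ with hα'
    set β' : Fin r := ⟨k, by omega⟩ with hβ'
    have ha' : (a : ℕ) < n α' := lt_of_lt_of_le a.isLt
      (hmono α' α (by simp [hα', Fin.le_def] <;> omega))
    have hb' : (b : ℕ) < n β' := lt_of_lt_of_le b.isLt
      (hmono β' β (by simp [hβ', Fin.le_def] <;> omega))
    have := key ⟨α', ⟨(a : ℕ), ha'⟩⟩ ⟨β, b⟩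
    rw [sumR α' α ⟨(a : ℕ), ha'⟩ a ⟨β, b⟩ (by simp [hα']; omega) rfl,
      sumL _ β' β ⟨(b : ℕ), hb'⟩ b (by simp [hβ']; omega) rfl] at this
    rw [← this, ih α' β' rfl (by simp [hα', hβ', Fin.lt_iff_val_lt_val, Fin.lt_def]; omega),
      map_zero]
end

section
/- Let n ≥ 1 and let X, Y, X', Y' be n×n complex matrices. Define the 5n×5n complex matrices J, M, M', each partitioned into a 5×5 array of n×n blocks: J has the identity I_n in block positions (1,2), (2,3), (3,4) and zero blocks elsewhere; M has X in block position (1,3), Y in block position (1,5), conj(X) in block position (2,4), I_n in block position (5,4), and zero blocks elsewhere; and M' is obtained from M by replacing X and Y with X' and Y'. Then the pairs (J, M) and (J, M') are consimilar if and only if the pairs (X, Y) and (X', Y') are consimilar, i.e., if and only if there exists a nonsingular n×n complex matrix C with conj(C)⁻¹·X·C = X' and conj(C)⁻¹·Y·C = Y'. -/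
/-- Two pairs of square complex matrices are consimilar if there is a
nonsingular `S` with `conj(S)⁻¹ * Aᵢ * S = Bᵢ` for `i = 1, 2`. -/
def ConsimilarPair {m : Type*} [Fintype m] [DecidableEq m]
    (A₁ A₂ B₁ B₂ : Matrix m m ℂ) : Prop :=
  ∃ S : Matrix m m ℂ, IsUnit S ∧
    (S.map (starRingEnd ℂ))⁻¹ * A₁ * S = B₁ ∧
    (S.map (starRingEnd ℂ))⁻¹ * A₂ * S = B₂

/-- The `5n × 5n` matrix `J` with identity blocks in positions
`(1,2), (2,3), (3,4)` (1-based) and zero blocks elsewhere. -/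
def Jmat (n : ℕ) : Matrix (Fin 5 × Fin n) (Fin 5 × Fin n) ℂ :=
  fun i j =>
    if ((i.1 = 0 ∧ j.1 = 1) ∨ (i.1 = 1 ∧ j.1 = 2) ∨ (i.1 = 2 ∧ j.1 = 3)) ∧ i.2 = j.2
      then 1 else 0

/-- The `5n × 5n` matrix `M` with blocks `X` at `(1,3)`, `Y` at `(1,5)`,
`conj(X)` at `(2,4)`, `I_n` at `(5,4)` (1-based positions), zero elsewhere. -/
def Mmat (n : ℕ) (X Y : Matrix (Fin n) (Fin n) ℂ) :
    Matrix (Fin 5 × Fin n) (Fin 5 × Fin n) ℂ :=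
  fun i j =>
    if i.1 = 0 ∧ j.1 = 2 then X i.2 j.2
    else if i.1 = 0 ∧ j.1 = 4 then Y i.2 j.2
    else if i.1 = 1 ∧ j.1 = 3 then starRingEnd ℂ (X i.2 j.2)
    else if i.1 = 4 ∧ j.1 = 3 then (if i.2 = j.2 then 1 else 0)
    else 0

section lems
variable {n : ℕ} (P : Matrix (Fin 5 × Fin n) (Fin 5 × Fin n) ℂ) (a : Fin n) (q : Fin 5 × Fin n)
  (p : Fin 5 × Fin n) (b : Fin n) (X Y : Matrix (Fin n) (Fin n) ℂ)

lemma Jl0 : (Jmat n * P) (0, a) q = P (1, a) q := by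
  rw [Matrix.mul_apply, Fintype.sum_prod_type]; simp [Jmat, ite_and]
lemma Jl1 : (Jmat n * P) (1, a) q = P (2, a) q := by
  rw [Matrix.mul_apply, Fintype.sum_prod_type]; simp [Jmat, ite_and]
lemma Jl2 : (Jmat n * P) (2, a) q = P (3, a) q := by
  rw [Matrix.mul_apply, Fintype.sum_prod_type]; simp [Jmat, ite_and]
lemma Jl3 : (Jmat n * P) (3, a) q = 0 := by
  rw [Matrix.mul_apply, Fintype.sum_prod_type]; simp [Jmat, ite_and]
lemma Jl4 : (Jmat n * P) (4, a) q = 0 := by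
  rw [Matrix.mul_apply, Fintype.sum_prod_type]; simp [Jmat, ite_and]

lemma Jr0 : (P * Jmat n) p (0, b) = 0 := by
  rw [Matrix.mul_apply, Fintype.sum_prod_type]; simp [Jmat, ite_and]
lemma Jr1 : (P * Jmat n) p (1, b) = P p (0, b) := by
  rw [Matrix.mul_apply, Fintype.sum_prod_type]; simp [Jmat, ite_and]
lemma Jr2 : (P * Jmat n) p (2, b) = P p (1, b) := by
  rw [Matrix.mul_apply, Fintype.sum_prod_type]; simp [Jmat, ite_and]
lemma Jr3 : (P * Jmat n) p (3, b) = P p (2, b) := by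
  rw [Matrix.mul_apply, Fintype.sum_prod_type]; simp [Jmat, ite_and]
lemma Jr4 : (P * Jmat n) p (4, b) = 0 := by
  rw [Matrix.mul_apply, Fintype.sum_prod_type]; simp [Jmat, ite_and]

lemma Ml0 : (Mmat n X Y * P) (0, a) q
    = ∑ c, X a c * P (2, c) q + ∑ c, Y a c * P (4, c) q := by
  rw [Matrix.mul_apply, Fintype.sum_prod_type, Fin.sum_univ_five]
  simp [Mmat]
lemma Ml1 : (Mmat n X Y * P) (1, a) q = ∑ c, starRingEnd ℂ (X a c) * P (3, c) q := by
  rw [Matrix.mul_apply, Fintype.sum_prod_type, Fin.sum_univ_five]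
  simp [Mmat]
lemma Ml2 : (Mmat n X Y * P) (2, a) q = 0 := by
  rw [Matrix.mul_apply, Fintype.sum_prod_type, Fin.sum_univ_five]
  simp [Mmat]
lemma Ml3 : (Mmat n X Y * P) (3, a) q = 0 := by
  rw [Matrix.mul_apply, Fintype.sum_prod_type, Fin.sum_univ_five]
  simp [Mmat]
lemma Ml4 : (Mmat n X Y * P) (4, a) q = P (3, a) q := by
  rw [Matrix.mul_apply, Fintype.sum_prod_type, Fin.sum_univ_five]
  simp [Mmat, ite_and]

lemma Mr0 : (P * Mmat n X Y) p (0, b) = 0 := by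
  rw [Matrix.mul_apply, Fintype.sum_prod_type, Fin.sum_univ_five]
  simp [Mmat]
lemma Mr1 : (P * Mmat n X Y) p (1, b) = 0 := by
  rw [Matrix.mul_apply, Fintype.sum_prod_type, Fin.sum_univ_five]
  simp [Mmat]
lemma Mr2 : (P * Mmat n X Y) p (2, b) = ∑ c, P p (0, c) * X c b := by
  rw [Matrix.mul_apply, Fintype.sum_prod_type, Fin.sum_univ_five]
  simp [Mmat]
lemma Mr3 : (P * Mmat n X Y) p (3, b)
    = ∑ c, P p (1, c) * starRingEnd ℂ (X c b) + P p (4, b) := by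
  rw [Matrix.mul_apply, Fintype.sum_prod_type, Fin.sum_univ_five]
  simp [Mmat, ite_and, mul_ite]
lemma Mr4 : (P * Mmat n X Y) p (4, b) = ∑ c, P p (0, c) * Y c b := by
  rw [Matrix.mul_apply, Fintype.sum_prod_type, Fin.sum_univ_five]
  simp [Mmat]
end lems

/-- the `(1,1)` block of a `5n × 5n` matrix -/
def blk {n : ℕ} (S : Matrix (Fin 5 × Fin n) (Fin 5 × Fin n) ℂ) :
    Matrix (Fin n) (Fin n) ℂ := fun a b => S (0, a) (0, b)

/-- block diagonal matrix with blocks `C, conj C, C, conj C, C` -/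
def Sdiag (n : ℕ) (C : Matrix (Fin n) (Fin n) ℂ) :
    Matrix (Fin 5 × Fin n) (Fin 5 × Fin n) ℂ :=
  fun p q => if p.1 = q.1 then
    (if p.1 = 1 ∨ p.1 = 3 then starRingEnd ℂ (C p.2 q.2) else C p.2 q.2) else 0

/-- The pairs `(J, M)` and `(J, M')` are consimilar if and only if `(X, Y)`
and `(X', Y')` are consimilar. -/
theorem stmt_10 {n : ℕ} (hn : 1 ≤ n) (X Y X' Y' : Matrix (Fin n) (Fin n) ℂ) :
    ConsimilarPair (Jmat n) (Mmat n X Y) (Jmat n) (Mmat n X' Y') ↔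
      ∃ C : Matrix (Fin n) (Fin n) ℂ, IsUnit C ∧
        (C.map (starRingEnd ℂ))⁻¹ * X * C = X' ∧
        (C.map (starRingEnd ℂ))⁻¹ * Y * C = Y' := by
  constructor
  · rintro ⟨S, hS, h1, h2⟩
    have hSd : IsUnit S.det := (Matrix.isUnit_iff_isUnit_det S).mp hS
    have hTu : IsUnit (S.map (starRingEnd ℂ)) := by
      have := hS.map (starRingEnd ℂ).mapMatrix; simpa using this
    have hTd : IsUnit (S.map (starRingEnd ℂ)).det := (Matrix.isUnit_iff_isUnit_det _).mp hTu
    have E1 : Jmat n * S = S.map (starRingEnd ℂ) * Jmat n := by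
      calc Jmat n * S = S.map (starRingEnd ℂ) * ((S.map (starRingEnd ℂ))⁻¹ * (Jmat n * S)) :=
            (Matrix.mul_nonsing_inv_cancel_left _ _ hTd).symm
      _ = S.map (starRingEnd ℂ) * ((S.map (starRingEnd ℂ))⁻¹ * Jmat n * S) := by
            rw [Matrix.mul_assoc]
      _ = S.map (starRingEnd ℂ) * Jmat n := by rw [h1]
    have E2 : Mmat n X Y * S = S.map (starRingEnd ℂ) * Mmat n X' Y' := by
      calc Mmat n X Y * S
          = S.map (starRingEnd ℂ) * ((S.map (starRingEnd ℂ))⁻¹ * (Mmat n X Y * S)) :=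
            (Matrix.mul_nonsing_inv_cancel_left _ _ hTd).symm
      _ = S.map (starRingEnd ℂ) * ((S.map (starRingEnd ℂ))⁻¹ * Mmat n X Y * S) := by
            rw [Matrix.mul_assoc]
      _ = S.map (starRingEnd ℂ) * Mmat n X' Y' := by rw [h2]
    have e1 : ∀ p q, (Jmat n * S) p q = (S.map (starRingEnd ℂ) * Jmat n) p q :=
      fun p q => by rw [E1]
    have e2 : ∀ p q, (Mmat n X Y * S) p q = (S.map (starRingEnd ℂ) * Mmat n X' Y') p q :=
      fun p q => by rw [E2]
    have hb11 : ∀ a b, S (1,a) (1,b) = starRingEnd ℂ (S (0,a) (0,b)) := by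
      intro a b; have := e1 (0,a) (1,b); rwa [Jl0, Jr1, Matrix.map_apply] at this
    have hb22 : ∀ a b, S (2,a) (2,b) = S (0,a) (0,b) := by
      intro a b; have := e1 (1,a) (2,b)
      rw [Jl1, Jr2, Matrix.map_apply, hb11] at this
      simpa using this
    have hb33 : ∀ a b, S (3,a) (3,b) = starRingEnd ℂ (S (0,a) (0,b)) := by
      intro a b; have := e1 (2,a) (3,b)
      rwa [Jl2, Jr3, Matrix.map_apply, hb22] at this
    have hz10 : ∀ a b, S (1,a) (0,b) = 0 := by
      intro a b; have := e1 (0,a) (0,b); rwa [Jl0, Jr0] at this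
    have hz20 : ∀ a b, S (2,a) (0,b) = 0 := by
      intro a b; have := e1 (1,a) (0,b); rwa [Jl1, Jr0] at this
    have hz30 : ∀ a b, S (3,a) (0,b) = 0 := by
      intro a b; have := e1 (2,a) (0,b); rwa [Jl2, Jr0] at this
    have hz40 : ∀ a b, S (4,a) (0,b) = 0 := by
      intro a b; have := e1 (4,a) (1,b)
      rw [Jl4, Jr1, Matrix.map_apply] at this
      simpa using this.symm
    have hz41 : ∀ a b, S (4,a) (1,b) = 0 := by
      intro a b; have := e1 (4,a) (2,b)
      rw [Jl4, Jr2, Matrix.map_apply] at this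
      simpa using this.symm
    have hz42 : ∀ a b, S (4,a) (2,b) = 0 := by
      intro a b; have := e1 (4,a) (3,b)
      rw [Jl4, Jr3, Matrix.map_apply] at this
      simpa using this.symm
    have hz24 : ∀ a b, S (2,a) (4,b) = 0 := by
      intro a b; have := e1 (1,a) (4,b); rwa [Jl1, Jr4] at this
    have h44 : ∀ a b, S (4,a) (4,b) = S (0,a) (0,b) := by
      intro a b; have := e2 (4,a) (3,b)
      rw [Ml4, Mr3] at this
      simp only [Matrix.map_apply, hz41, map_zero, zero_mul, Finset.sum_const_zero,
        zero_add, hb33] at this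
      exact ((starRingEnd ℂ).injective this).symm
    have hXm : X * blk S = (blk S).map (starRingEnd ℂ) * X' := by
      ext a b
      have := e2 (0,a) (2,b)
      rw [Ml0, Mr2] at this
      simp only [Matrix.map_apply, hz42, hb22, mul_zero, Finset.sum_const_zero,
        add_zero] at this
      simpa [Matrix.mul_apply, Matrix.map_apply, blk] using this
    have hYm : Y * blk S = (blk S).map (starRingEnd ℂ) * Y' := by
      ext a b
      have := e2 (0,a) (4,b)
      rw [Ml0, Mr4] at this
      simp only [Matrix.map_apply, hz24, h44, mul_zero, Finset.sum_const_zero,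
        zero_add] at this
      simpa [Matrix.mul_apply, Matrix.map_apply, blk] using this
    have hz0 : ∀ (i : Fin 5) (a b : Fin n), i ≠ 0 → S (i,a) (0,b) = 0 := by
      intro i a b hi
      fin_cases i
      · exact absurd rfl hi
      · exact hz10 a b
      · exact hz20 a b
      · exact hz30 a b
      · exact hz40 a b
    have hAdet : (blk S).det ≠ 0 := by
      intro hdet
      obtain ⟨v, hv, hAv⟩ := Matrix.exists_mulVec_eq_zero_iff.mpr hdet
      set w : Fin 5 × Fin n → ℂ := fun p => if p.1 = 0 then v p.2 else 0 with hw
      have hwne : w ≠ 0 := by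
        intro h0; apply hv; funext c
        have := congrFun h0 (0, c); simpa [hw] using this
      have hSw : S.mulVec w = 0 := by
        funext p
        obtain ⟨i, a⟩ := p
        have hexp : S.mulVec w (i,a) = ∑ c, S (i,a) (0,c) * v c := by
          simp [Matrix.mulVec, dotProduct, hw, Fintype.sum_prod_type,
            Fin.sum_univ_five]
        rw [hexp]
        rcases eq_or_ne i 0 with h | h
        · subst h
          have := congrFun hAv a
          simpa [Matrix.mulVec, dotProduct, blk] using this
        · have : ∀ c : Fin n, S (i,a) (0,c) * v c = 0 := fun c => by
            rw [hz0 i a c h, zero_mul]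
          simp [this]
      have : S.det = 0 := Matrix.exists_mulVec_eq_zero_iff.mp ⟨w, hwne, hSw⟩
      exact hSd.ne_zero this
    have hAu : IsUnit (blk S) :=
      (Matrix.isUnit_iff_isUnit_det _).mpr (isUnit_iff_ne_zero.mpr hAdet)
    have hAcd : IsUnit ((blk S).map (starRingEnd ℂ)).det := by
      apply (Matrix.isUnit_iff_isUnit_det _).mp
      have := hAu.map (starRingEnd ℂ).mapMatrix; simpa using this
    refine ⟨blk S, hAu, ?_, ?_⟩
    · rw [Matrix.mul_assoc, hXm, Matrix.nonsing_inv_mul_cancel_left _ _ hAcd]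
    · rw [Matrix.mul_assoc, hYm, Matrix.nonsing_inv_mul_cancel_left _ _ hAcd]
  · rintro ⟨C, hC, hX, hY⟩
    have hCd : IsUnit C.det := (Matrix.isUnit_iff_isUnit_det C).mp hC
    have hCc : IsUnit (C.map (starRingEnd ℂ)) := by
      have := hC.map (starRingEnd ℂ).mapMatrix; simpa using this
    have hCcd : IsUnit (C.map (starRingEnd ℂ)).det := (Matrix.isUnit_iff_isUnit_det _).mp hCc
    have hXc : X * C = C.map (starRingEnd ℂ) * X' := by
      calc X * C = C.map (starRingEnd ℂ) * ((C.map (starRingEnd ℂ))⁻¹ * (X * C)) :=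
            (Matrix.mul_nonsing_inv_cancel_left _ _ hCcd).symm
      _ = C.map (starRingEnd ℂ) * ((C.map (starRingEnd ℂ))⁻¹ * X * C) := by
            rw [Matrix.mul_assoc ((C.map (starRingEnd ℂ))⁻¹)]
      _ = C.map (starRingEnd ℂ) * X' := by rw [hX]
    have hYc : Y * C = C.map (starRingEnd ℂ) * Y' := by
      calc Y * C = C.map (starRingEnd ℂ) * ((C.map (starRingEnd ℂ))⁻¹ * (Y * C)) :=
            (Matrix.mul_nonsing_inv_cancel_left _ _ hCcd).symm
      _ = C.map (starRingEnd ℂ) * ((C.map (starRingEnd ℂ))⁻¹ * Y * C) := by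
            rw [Matrix.mul_assoc ((C.map (starRingEnd ℂ))⁻¹)]
      _ = C.map (starRingEnd ℂ) * Y' := by rw [hY]
    have hXc' : ∀ a b, ∑ c, X a c * C c b = ∑ c, starRingEnd ℂ (C a c) * X' c b := by
      intro a b
      have := congrFun (congrFun hXc a) b
      simpa [Matrix.mul_apply, Matrix.map_apply] using this
    have hYc' : ∀ a b, ∑ c, Y a c * C c b = ∑ c, starRingEnd ℂ (C a c) * Y' c b := by
      intro a b
      have := congrFun (congrFun hYc a) b
      simpa [Matrix.mul_apply, Matrix.map_apply] using this
    have hXcc' : ∀ a b, ∑ c, starRingEnd ℂ (X a c) * starRingEnd ℂ (C c b)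
        = ∑ c, C a c * starRingEnd ℂ (X' c b) := by
      intro a b
      have := congrArg (starRingEnd ℂ) (hXc' a b)
      simpa [map_sum] using this
    have h1e : ∀ a b, ∑ c, C a c * C⁻¹ c b = (1 : Matrix (Fin n) (Fin n) ℂ) a b := by
      intro a b; rw [← Matrix.mul_apply, Matrix.mul_nonsing_inv _ hCd]
    have h2e : ∀ a b, ∑ c, starRingEnd ℂ (C a c) * starRingEnd ℂ (C⁻¹ c b)
        = (1 : Matrix (Fin n) (Fin n) ℂ) a b := by
      intro a b
      have := congrArg (starRingEnd ℂ) (h1e a b)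
      simpa [map_sum, Matrix.one_apply, apply_ite] using this
    have hST : Sdiag n C * Sdiag n C⁻¹ = 1 := by
      ext ⟨i, a⟩ ⟨j, b⟩
      rw [Matrix.mul_apply, Fintype.sum_prod_type, Fin.sum_univ_five]
      fin_cases i <;> fin_cases j <;>
        simp [Sdiag, Matrix.one_apply, Prod.ext_iff, h1e, h2e]
    have hSu : IsUnit (Sdiag n C) :=
      (Matrix.isUnit_iff_isUnit_det _).mpr (Matrix.isUnit_det_of_right_inverse hST)
    have hTc : IsUnit ((Sdiag n C).map (starRingEnd ℂ)) := by
      have := hSu.map (starRingEnd ℂ).mapMatrix; simpa using this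
    have hTcd : IsUnit ((Sdiag n C).map (starRingEnd ℂ)).det :=
      (Matrix.isUnit_iff_isUnit_det _).mp hTc
    have hJ : Jmat n * Sdiag n C = (Sdiag n C).map (starRingEnd ℂ) * Jmat n := by
      ext ⟨i, a⟩ ⟨j, b⟩
      fin_cases i <;> fin_cases j <;>
        simp [Jl0, Jl1, Jl2, Jl3, Jl4, Jr0, Jr1, Jr2, Jr3, Jr4, Sdiag, Matrix.map_apply]
    have hM : Mmat n X Y * Sdiag n C = (Sdiag n C).map (starRingEnd ℂ) * Mmat n X' Y' := by
      ext ⟨i, a⟩ ⟨j, b⟩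
      fin_cases i <;> fin_cases j <;>
        simp [Ml0, Ml1, Ml2, Ml3, Ml4, Mr0, Mr1, Mr2, Mr3, Mr4, Sdiag, Matrix.map_apply,
          hXc', hYc', hXcc']
    refine ⟨Sdiag n C, hSu, ?_, ?_⟩
    · rw [Matrix.mul_assoc, hJ, Matrix.nonsing_inv_mul_cancel_left _ _ hTcd]
    · rw [Matrix.mul_assoc, hM, Matrix.nonsing_inv_mul_cancel_left _ _ hTcd]
end

section
/- Let n ≥ 1 and let X, Y be arbitrary n×n complex matrices. Define the 5n×5n complex matrices J and M, each partitioned into a 5×5 array of n×n blocks: J has the identity I_n in block positions (1,2), (2,3), (3,4) and zero blocks elsewhere; M has X in block position (1,3), Y in block position (1,5), conj(X) in block position (2,4), I_n in block position (5,4), and zero blocks elsewhere. Then conj(M)·J = J·M; consequently the conjugate-semilinear operators u ↦ conj(J·u) and u ↦ conj(M·u) on ℂ^{5n} commute. -/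
lemma Jmat_real (n : ℕ) : (Jmat n).map (starRingEnd ℂ) = Jmat n := by
  ext i j
  simp only [Jmat, Matrix.map_apply]
  split <;> simp

lemma key {n : ℕ} (X Y : Matrix (Fin n) (Fin n) ℂ) :
    ((Mmat n X Y).map (starRingEnd ℂ)) * Jmat n = Jmat n * Mmat n X Y := by
  ext ⟨a, i⟩ ⟨b, j⟩
  simp only [Matrix.mul_apply, Matrix.map_apply, Jmat, Mmat, Fintype.sum_prod_type]
  rw [Fin.sum_univ_five, Fin.sum_univ_five]
  fin_cases a <;> fin_cases b <;> simp [Finset.mul_sum, Finset.sum_ite_eq, Finset.sum_ite_eq']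

lemma star_mulVec' {n : Type*} [Fintype n] (A : Matrix n n ℂ) (v : n → ℂ) :
    star (A.mulVec v) = (A.map (starRingEnd ℂ)).mulVec (star v) := by
  ext i
  simp [Matrix.mulVec, dotProduct, star_sum]

/-- `conj(M) · J = J · M`, and consequently the conjugate-semilinear operators
`u ↦ conj (J·u)` and `u ↦ conj (M·u)` on `ℂ^{5n}` commute. -/
theorem stmt_13 {n : ℕ} (hn : 1 ≤ n) (X Y : Matrix (Fin n) (Fin n) ℂ) :
    ((Mmat n X Y).map (starRingEnd ℂ)) * Jmat n = Jmat n * Mmat n X Y ∧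
      ∀ u : Fin 5 × Fin n → ℂ,
        star ((Mmat n X Y).mulVec (star ((Jmat n).mulVec u))) =
          star ((Jmat n).mulVec (star ((Mmat n X Y).mulVec u))) := by
  have h := key X Y
  refine ⟨h, fun u => ?_⟩
  have h2 : Mmat n X Y * Jmat n = Jmat n * (Mmat n X Y).map (starRingEnd ℂ) := by
    have hmm : ((Mmat n X Y).map (starRingEnd ℂ)).map (starRingEnd ℂ) = Mmat n X Y := by
      ext i j; simp [Matrix.map_apply]
    have := congrArg (Matrix.map · (starRingEnd ℂ)) h
    simpa [Matrix.map_mul, Jmat_real, hmm] using this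
  congr 1
  rw [star_mulVec', Jmat_real, Matrix.mulVec_mulVec, star_mulVec',
    Matrix.mulVec_mulVec, h2]
end
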